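/- arXiv:1008.1029 — 5 statements merged into one kernel-verified Lean document; each statement's English description precedes it below -/
import Mathlib

section
/- Let A be a nonzero m×m matrix over F₂ and let G_A ≤ V(Q_A) be the gauge group of the generalized Bacon–Shor code of A, with stabilizer S_A = G_A ∩ C(G_A). Then: (i) the number of physical qubits |Q_A| equals |A|, the number of nonzero entries of A; (ii) dim C(G_A) − dim S_A = 2·rank(A), i.e. the code has k = rank(A) logical qubits; (iii) if rank(A) ≥ 1, the minimum weight of an element of C(S_A) \ G_A equals min(drow(A), dcol(A)). -/
set_option linter.unusedSectionVars false

open Finset Matrix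

abbrev F2 : Type := ZMod 2

abbrev PauliSpace (Q : Type) := Q → F2 × F2

section Pauli

variable {Q : Type} [Fintype Q] [DecidableEq Q]

/-- Support of a Pauli vector. -/
def psupp (v : PauliSpace Q) : Finset Q := Finset.univ.filter (fun q => v q ≠ (0, 0))

/-- Weight of a Pauli vector. -/
def pwt (v : PauliSpace Q) : ℕ := (psupp v).card

/-- The symplectic form. -/
def omegaF (u v : PauliSpace Q) : F2 :=
  ∑ q, ((u q).1 * (v q).2 + (u q).2 * (v q).1)

lemma omegaF_add_left (u v w : PauliSpace Q) :
    omegaF (u + v) w = omegaF u w + omegaF v w := by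
  simp only [omegaF, Pi.add_apply, Prod.fst_add, Prod.snd_add, ← Finset.sum_add_distrib]
  exact Finset.sum_congr rfl (fun q _ => by ring)

lemma omegaF_smul_left (c : F2) (u w : PauliSpace Q) :
    omegaF (c • u) w = c * omegaF u w := by
  simp only [omegaF, Pi.smul_apply, Prod.smul_fst, Prod.smul_snd, smul_eq_mul,
    Finset.mul_sum]
  exact Finset.sum_congr rfl (fun q _ => by ring)

/-- Centralizer of a subspace w.r.t. the symplectic form. -/
def pcent (G : Submodule F2 (PauliSpace Q)) : Submodule F2 (PauliSpace Q) where
  carrier := {v | ∀ g ∈ G, omegaF v g = 0}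
  zero_mem' := by
    intro g _
    simp [omegaF]
  add_mem' := by
    intro a b ha hb g hg
    rw [omegaF_add_left, ha g hg, hb g hg, add_zero]
  smul_mem' := by
    intro c a ha g hg
    rw [omegaF_smul_left, ha g hg, mul_zero]

/-- Stabilizer group of a gauge group. -/
def pstab (G : Submodule F2 (PauliSpace Q)) : Submodule F2 (PauliSpace Q) := G ⊓ pcent G

/-- Single-qubit Pauli X vector. -/
def Xop (c : Q) : PauliSpace Q := fun q => if q = c then (1, 0) else (0, 0)

/-- Single-qubit Pauli Z vector. -/
def Zop (c : Q) : PauliSpace Q := fun q => if q = c then (0, 1) else (0, 0)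

/-- The set of weights of dressed logical operators; its infimum is the distance. -/
def distSet (G : Submodule F2 (PauliSpace Q)) : Set ℕ :=
  {w | ∃ v, v ∈ pcent (pstab G) ∧ v ∉ G ∧ pwt v = w}

/-- Pauli vectors supported in `M`. -/
def PMod (M : Finset Q) : Submodule F2 (PauliSpace Q) where
  carrier := {v | ∀ q, q ∉ M → v q = 0}
  zero_mem' := by intro q _; rfl
  add_mem' := by
    intro a b ha hb q hq
    simp [Pi.add_apply, ha q hq, hb q hq]
  smul_mem' := by
    intro c a ha q hq
    simp [Pi.smul_apply, ha q hq]

/-- Projection onto the qubits in `M`. -/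
def projL (M : Finset Q) : PauliSpace Q →ₗ[F2] PauliSpace Q where
  toFun v := fun q => if q ∈ M then v q else 0
  map_add' a b := by funext q; by_cases h : q ∈ M <;> simp [h]
  map_smul' c a := by funext q; by_cases h : q ∈ M <;> simp [h]

/-- Number of independent dressed logical operators supported in `M`. -/
noncomputable def lM (G : Submodule F2 (PauliSpace Q)) (M : Finset Q) : ℕ :=
  Module.finrank F2 ↥(pcent ((pstab G).map (projL M)) ⊓ PMod M)
    - Module.finrank F2 ↥(G ⊓ PMod M)

/-- Number of independent bare logical operators supported in `M`. -/
noncomputable def lbareM (G : Submodule F2 (PauliSpace Q)) (M : Finset Q) : ℕ :=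
  Module.finrank F2 ↥(pcent (G.map (projL M)) ⊓ PMod M)
    - Module.finrank F2 ↥(pstab G ⊓ PMod M)

end Pauli

section Classical

variable {ι : Type} [Fintype ι] [DecidableEq ι]

/-- Hamming weight of a classical vector. -/
def hwt (v : ι → F2) : ℕ := (Finset.univ.filter (fun i => v i ≠ 0)).card

/-- Row space of a matrix. -/
def Crow (A : Matrix ι ι F2) : Submodule F2 (ι → F2) := Submodule.span F2 (Set.range A)

/-- Column space of a matrix. -/
def Ccol (A : Matrix ι ι F2) : Submodule F2 (ι → F2) := Submodule.span F2 (Set.range Aᵀ)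

/-- Minimum distance of the row space. -/
noncomputable def drow (A : Matrix ι ι F2) : ℕ := sInf {w | ∃ v ∈ Crow A, v ≠ 0 ∧ hwt v = w}

/-- Minimum distance of the column space. -/
noncomputable def dcol (A : Matrix ι ι F2) : ℕ := sInf {w | ∃ v ∈ Ccol A, v ≠ 0 ∧ hwt v = w}

/-- Number of nonzero entries of a matrix. -/
def nnz (A : Matrix ι ι F2) : ℕ :=
  (Finset.univ.filter (fun p : ι × ι => A p.1 p.2 ≠ 0)).card

end Classical

section BaconShor

variable {m : ℕ}

/-- Qubit set of the generalized Bacon-Shor code: cells with `A i j = 1`. -/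
abbrev QA (A : Matrix (Fin m) (Fin m) F2) : Type := {c : Fin m × Fin m // A c.1 c.2 = 1}

/-- Generators of the gauge group. -/
def gaugeSet (A : Matrix (Fin m) (Fin m) F2) : Set (PauliSpace (QA A)) :=
  {v | ∃ c c' : QA A, c ≠ c' ∧
    ((c.1.1 = c'.1.1 ∧ v = Xop c + Xop c') ∨ (c.1.2 = c'.1.2 ∧ v = Zop c + Zop c'))}

/-- Gauge group of the generalized Bacon-Shor code. -/
def gaugeBS (A : Matrix (Fin m) (Fin m) F2) : Submodule F2 (PauliSpace (QA A)) :=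
  Submodule.span F2 (gaugeSet A)

/-- The row operator `R i`. -/
def Rop (A : Matrix (Fin m) (Fin m) F2) (i : Fin m) : PauliSpace (QA A) :=
  ∑ c ∈ Finset.univ.filter (fun c : QA A => c.1.1 = i), Zop c

/-- The column operator `C j`. -/
def Cop (A : Matrix (Fin m) (Fin m) F2) (j : Fin m) : PauliSpace (QA A) :=
  ∑ c ∈ Finset.univ.filter (fun c : QA A => c.1.2 = j), Xop c

/-- X-type operator parameterized by a binary vector. -/
def PXop (A : Matrix (Fin m) (Fin m) F2) (x : Fin m → F2) : PauliSpace (QA A) :=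
  ∑ j, x j • Cop A j

/-- Z-type operator parameterized by a binary vector. -/
def PZop (A : Matrix (Fin m) (Fin m) F2) (z : Fin m → F2) : PauliSpace (QA A) :=
  ∑ i, z i • Rop A i

end BaconShor

/-- Binary entropy. -/
noncomputable def H2 (p : ℝ) : ℝ := -p * Real.logb 2 p - (1 - p) * Real.logb 2 (1 - p)
section PauliAux

variable {Q : Type} [Fintype Q] [DecidableEq Q]

lemma F2_cases (a : F2) : a = 0 ∨ a = 1 := by revert a; decide

lemma F2_ne_zero {a : F2} (h : a ≠ 0) : a = 1 := by revert a; decide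

lemma F2_add_self (a : F2) : a + a = 0 := by revert a; decide

lemma omegaF_comm (u v : PauliSpace Q) : omegaF u v = omegaF v u := by
  unfold omegaF
  exact Finset.sum_congr rfl (fun q _ => by ring)

lemma omegaF_add_right (u v w : PauliSpace Q) :
    omegaF u (v + w) = omegaF u v + omegaF u w := by
  rw [omegaF_comm, omegaF_add_left, omegaF_comm v, omegaF_comm w]

lemma mem_pcent_span {s : Set (PauliSpace Q)} {v : PauliSpace Q} :
    v ∈ pcent (Submodule.span F2 s) ↔ ∀ g ∈ s, omegaF v g = 0 := by
  constructor
  · intro h g hg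
    exact h g (Submodule.subset_span hg)
  · intro h g hg
    induction hg using Submodule.span_induction with
    | mem x hx => exact h x hx
    | zero => rw [omegaF_comm]; simp [omegaF]
    | add x y _ _ hx hy => rw [omegaF_add_right, hx, hy, add_zero]
    | smul c x _ hx => rw [omegaF_comm, omegaF_smul_left, omegaF_comm, hx, mul_zero]

lemma mem_pcent {G : Submodule F2 (PauliSpace Q)} {v : PauliSpace Q} :
    v ∈ pcent G ↔ ∀ g ∈ G, omegaF v g = 0 := Iff.rfl

lemma omegaF_Xop (u : PauliSpace Q) (c : Q) : omegaF u (Xop c) = (u c).2 := by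
  unfold omegaF Xop
  rw [Finset.sum_eq_single c]
  · simp
  · intro b _ hb; simp [hb]
  · intro h; exact absurd (Finset.mem_univ c) h

lemma omegaF_Zop (u : PauliSpace Q) (c : Q) : omegaF u (Zop c) = (u c).1 := by
  unfold omegaF Zop
  rw [Finset.sum_eq_single c]
  · simp
  · intro b _ hb; simp [hb]
  · intro h; exact absurd (Finset.mem_univ c) h

end PauliAux
lemma F2_add_eq_zero {a b : F2} : a + b = 0 ↔ a = b := by revert a b; decide

section BSAux

variable {m : ℕ} (A : Matrix (Fin m) (Fin m) F2)

/-- Row sums of a function on the qubits. -/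
def rsumA (f : QA A → F2) : Fin m → F2 :=
  fun i => ∑ c : QA A, if c.1.1 = i then f c else 0

/-- Column sums of a function on the qubits. -/
def csumA (f : QA A → F2) : Fin m → F2 :=
  fun j => ∑ c : QA A, if c.1.2 = j then f c else 0

lemma rsumA_add (f g : QA A → F2) : rsumA A (f + g) = rsumA A f + rsumA A g := by
  funext i
  simp only [rsumA, Pi.add_apply, ← Finset.sum_add_distrib]
  exact Finset.sum_congr rfl (fun c _ => by split_ifs <;> simp)

lemma csumA_add (f g : QA A → F2) : csumA A (f + g) = csumA A f + csumA A g := by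
  funext j
  simp only [csumA, Pi.add_apply, ← Finset.sum_add_distrib]
  exact Finset.sum_congr rfl (fun c _ => by split_ifs <;> simp)

/-- The linear map sending a Pauli vector to (row sums of X part, column sums of Z part). -/
def LmapA : PauliSpace (QA A) →ₗ[F2] (Fin m → F2) × (Fin m → F2) where
  toFun v := (rsumA A (fun c => (v c).1), csumA A (fun c => (v c).2))
  map_add' a b := by
    have h1 : (fun c => ((a + b) c).1) = (fun c => (a c).1) + (fun c => (b c).1) := rfl
    have h2 : (fun c => ((a + b) c).2) = (fun c => (a c).2) + (fun c => (b c).2) := rfl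
    simp only [h1, h2, rsumA_add, csumA_add]; rfl
  map_smul' r a := by
    rcases F2_cases r with h | h <;> subst h
    · have h1 : (fun c => (((0:F2) • a) c).1) = (fun _ => (0:F2)) := by
        funext c; simp
      have h2 : (fun c => (((0:F2) • a) c).2) = (fun _ => (0:F2)) := by
        funext c; simp
      simp only [h1, h2]
      ext x <;> simp [rsumA, csumA]
    · simp only [one_smul, RingHom.id_apply]

lemma Xop_apply (c q : QA A) : Xop c q = if q = c then ((1:F2), (0:F2)) else 0 := rfl

lemma Zop_apply (c q : QA A) : Zop c q = if q = c then ((0:F2), (1:F2)) else 0 := rfl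

lemma Cop_apply (j : Fin m) (q : QA A) :
    Cop A j q = if q.1.2 = j then ((1:F2), (0:F2)) else 0 := by
  unfold Cop
  rw [Finset.sum_apply]
  rcases eq_or_ne q.1.2 j with h | h
  · rw [Finset.sum_eq_single q]
    · simp [Xop_apply, h]
    · intro b _ hb; rw [Xop_apply, if_neg (fun hh => hb hh.symm)]
    · intro hq; exact absurd (Finset.mem_filter.2 ⟨Finset.mem_univ q, h⟩) hq
  · rw [Finset.sum_eq_zero, if_neg h]
    intro b hb
    have hb2 := (Finset.mem_filter.1 hb).2
    have : ¬ q = b := fun hh => h (hh ▸ hb2)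
    simp [Xop_apply, this]

lemma Rop_apply (i : Fin m) (q : QA A) :
    Rop A i q = if q.1.1 = i then ((0:F2), (1:F2)) else 0 := by
  unfold Rop
  rw [Finset.sum_apply]
  rcases eq_or_ne q.1.1 i with h | h
  · rw [Finset.sum_eq_single q]
    · simp [Zop_apply, h]
    · intro b _ hb; rw [Zop_apply, if_neg (fun hh => hb hh.symm)]
    · intro hq; exact absurd (Finset.mem_filter.2 ⟨Finset.mem_univ q, h⟩) hq
  · rw [Finset.sum_eq_zero, if_neg h]
    intro b hb
    have hb2 := (Finset.mem_filter.1 hb).2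
    have : ¬ q = b := fun hh => h (hh ▸ hb2)
    simp [Zop_apply, this]

lemma PXop_apply (x : Fin m → F2) (q : QA A) : PXop A x q = (x q.1.2, 0) := by
  unfold PXop
  rw [Finset.sum_apply]
  rw [Finset.sum_eq_single q.1.2]
  · simp [Cop_apply]
  · intro j _ hj
    have : (x j • Cop A j) q = x j • Cop A j q := rfl
    rw [this, Cop_apply, if_neg (fun hh => hj hh.symm), smul_zero]
  · intro h; exact absurd (Finset.mem_univ _) h

lemma PZop_apply (z : Fin m → F2) (q : QA A) : PZop A z q = (0, z q.1.1) := by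
  unfold PZop
  rw [Finset.sum_apply]
  rw [Finset.sum_eq_single q.1.1]
  · simp [Rop_apply]
  · intro i _ hi
    have : (z i • Rop A i) q = z i • Rop A i q := rfl
    rw [this, Rop_apply, if_neg (fun hh => hi hh.symm), smul_zero]
  · intro h; exact absurd (Finset.mem_univ _) h

lemma PXZ_apply (x z : Fin m → F2) (q : QA A) :
    (PXop A x + PZop A z) q = (x q.1.2, z q.1.1) := by
  simp [PXop_apply, PZop_apply, Prod.ext_iff]

end BSAux
section BSAux2

variable {m : ℕ} (A : Matrix (Fin m) (Fin m) F2)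

lemma LmapA_apply (v : PauliSpace (QA A)) :
    LmapA A v = (rsumA A (fun c => (v c).1), csumA A (fun c => (v c).2)) := rfl

lemma rsumA_Xind (c : QA A) :
    rsumA A (fun q => if q = c then 1 else 0) = (fun i => if c.1.1 = i then 1 else 0) := by
  funext i
  unfold rsumA
  rw [Finset.sum_eq_single c]
  · simp
  · intro b _ hb; simp [hb]
  · intro h; exact absurd (Finset.mem_univ _) h

lemma csumA_Xind (c : QA A) :
    csumA A (fun q => if q = c then 1 else 0) = (fun j => if c.1.2 = j then 1 else 0) := by
  funext j
  unfold csumA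
  rw [Finset.sum_eq_single c]
  · simp
  · intro b _ hb; simp [hb]
  · intro h; exact absurd (Finset.mem_univ _) h

/-- An X-type vector with even support on each row is in the gauge group. -/
lemma xvec_mem_gauge :
    ∀ n (f : QA A → F2), (Finset.univ.filter (fun c => f c ≠ 0)).card = n →
      rsumA A f = 0 → (fun c => (f c, (0:F2))) ∈ gaugeBS A := by
  intro n
  induction n using Nat.strong_induction_on with
  | _ n ih =>
    intro f hcard hf
    rcases eq_or_ne f 0 with h0 | h0
    · subst h0
      exact Submodule.zero_mem (gaugeBS A)
    · obtain ⟨c, hc⟩ := Function.ne_iff.1 h0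
      have hc1 : f c = 1 := F2_ne_zero hc
      -- find a second qubit in the same row with f ≠ 0
      have hrow : ∑ q : QA A, (if q.1.1 = c.1.1 then f q else 0) = 0 := congrFun hf c.1.1
      have hex : ∃ c' : QA A, c' ≠ c ∧ c'.1.1 = c.1.1 ∧ f c' ≠ 0 := by
        by_contra hno
        push_neg at hno
        rw [Finset.sum_eq_single c] at hrow
        · rw [if_pos rfl, hc1] at hrow; exact one_ne_zero hrow
        · intro b _ hb
          rcases eq_or_ne b.1.1 c.1.1 with hb2 | hb2
          · rw [if_pos hb2, hno b hb hb2]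
          · rw [if_neg hb2]
        · intro h; exact absurd (Finset.mem_univ _) h
      obtain ⟨c', hne, hrow', hc'⟩ := hex
      have hc'1 : f c' = 1 := F2_ne_zero hc'
      set g : QA A → F2 := fun q => f q + (if q = c then 1 else 0) + (if q = c' then 1 else 0)
        with hg
      have hgc : g c = 0 := by
        simp only [hg, if_pos rfl, if_neg (fun hh => hne hh.symm : ¬ c = c'), hc1]
        decide
      have hgc' : g c' = 0 := by
        simp only [hg, if_pos rfl, if_neg hne, hc'1]
        decide
      have hgq : ∀ q, q ≠ c → q ≠ c' → g q = f q := by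
        intro q h1 h2
        simp only [hg, if_neg h1, if_neg h2, add_zero]
      -- support of g is strictly smaller
      have hsub : Finset.univ.filter (fun q => g q ≠ 0) ⊂
          Finset.univ.filter (fun q => f q ≠ 0) := by
        constructor
        · intro q hq
          rw [Finset.mem_filter] at hq ⊢
          refine ⟨Finset.mem_univ _, ?_⟩
          rcases eq_or_ne q c with rfl | h1
          · exact absurd hgc hq.2
          rcases eq_or_ne q c' with rfl | h2
          · exact absurd hgc' hq.2
          · rw [← hgq q h1 h2]; exact hq.2
        · intro hsup
          have := hsup (Finset.mem_filter.2 ⟨Finset.mem_univ c, hc⟩)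
          rw [Finset.mem_filter] at this
          exact this.2 hgc
      have hcard' : (Finset.univ.filter (fun q => g q ≠ 0)).card < n :=
        hcard ▸ Finset.card_lt_card hsub
      -- row sums of g vanish
      have hgsum : rsumA A g = 0 := by
        have : g = f + ((fun q => if q = c then 1 else 0) +
            (fun q => if q = c' then 1 else 0)) := by
          funext q; simp [hg]; ring
        rw [this, rsumA_add, rsumA_add, hf, rsumA_Xind, rsumA_Xind, hrow']
        funext i
        simp only [Pi.add_apply, Pi.zero_apply, zero_add]
        split_ifs <;> decide
      have hgmem := ih _ hcard' g rfl hgsum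
      -- the generator
      have hgen : Xop c + Xop c' ∈ gaugeBS A := by
        apply Submodule.subset_span
        exact ⟨c, c', fun hh => hne hh.symm, Or.inl ⟨hrow'.symm, rfl⟩⟩
      have := Submodule.add_mem _ hgmem hgen
      convert this using 1
      funext q
      show (f q, (0:F2)) = ((fun c => (g c, (0:F2))) + (Xop c + Xop c')) q
      have : ((fun c => (g c, (0:F2))) + (Xop c + Xop c')) q =
          (g q + ((if q = c then 1 else 0) + (if q = c' then 1 else 0)), 0) := by
        simp [Xop_apply, Prod.ext_iff]
        split_ifs <;> simp
      rw [this]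
      refine Prod.ext ?_ rfl
      show f q = g q + ((if q = c then 1 else 0) + (if q = c' then 1 else 0))
      simp only [hg]
      generalize (if q = c then (1:F2) else 0) = a
      generalize (if q = c' then (1:F2) else 0) = b
      generalize f q = x
      revert x a b
      decide

end BSAux2
section BSAux3

variable {m : ℕ} (A : Matrix (Fin m) (Fin m) F2)

/-- A Z-type vector with even support on each column is in the gauge group. -/
lemma zvec_mem_gauge :
    ∀ n (f : QA A → F2), (Finset.univ.filter (fun c => f c ≠ 0)).card = n →
      csumA A f = 0 → (fun c => ((0:F2), f c)) ∈ gaugeBS A := by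
  intro n
  induction n using Nat.strong_induction_on with
  | _ n ih =>
    intro f hcard hf
    rcases eq_or_ne f 0 with h0 | h0
    · subst h0
      exact Submodule.zero_mem (gaugeBS A)
    · obtain ⟨c, hc⟩ := Function.ne_iff.1 h0
      have hc1 : f c = 1 := F2_ne_zero hc
      have hrow : ∑ q : QA A, (if q.1.2 = c.1.2 then f q else 0) = 0 := congrFun hf c.1.2
      have hex : ∃ c' : QA A, c' ≠ c ∧ c'.1.2 = c.1.2 ∧ f c' ≠ 0 := by
        by_contra hno
        push_neg at hno
        rw [Finset.sum_eq_single c] at hrow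
        · rw [if_pos rfl, hc1] at hrow; exact one_ne_zero hrow
        · intro b _ hb
          rcases eq_or_ne b.1.2 c.1.2 with hb2 | hb2
          · rw [if_pos hb2, hno b hb hb2]
          · rw [if_neg hb2]
        · intro h; exact absurd (Finset.mem_univ _) h
      obtain ⟨c', hne, hrow', hc'⟩ := hex
      have hc'1 : f c' = 1 := F2_ne_zero hc'
      set g : QA A → F2 := fun q => f q + (if q = c then 1 else 0) + (if q = c' then 1 else 0)
        with hg
      have hgc : g c = 0 := by
        simp only [hg, if_pos rfl, if_neg (fun hh => hne hh.symm : ¬ c = c'), hc1]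
        decide
      have hgc' : g c' = 0 := by
        simp only [hg, if_pos rfl, if_neg hne, hc'1]
        decide
      have hgq : ∀ q, q ≠ c → q ≠ c' → g q = f q := by
        intro q h1 h2
        simp only [hg, if_neg h1, if_neg h2, add_zero]
      have hsub : Finset.univ.filter (fun q => g q ≠ 0) ⊂
          Finset.univ.filter (fun q => f q ≠ 0) := by
        constructor
        · intro q hq
          rw [Finset.mem_filter] at hq ⊢
          refine ⟨Finset.mem_univ _, ?_⟩
          rcases eq_or_ne q c with rfl | h1
          · exact absurd hgc hq.2
          rcases eq_or_ne q c' with rfl | h2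
          · exact absurd hgc' hq.2
          · rw [← hgq q h1 h2]; exact hq.2
        · intro hsup
          have := hsup (Finset.mem_filter.2 ⟨Finset.mem_univ c, hc⟩)
          rw [Finset.mem_filter] at this
          exact this.2 hgc
      have hcard' : (Finset.univ.filter (fun q => g q ≠ 0)).card < n :=
        hcard ▸ Finset.card_lt_card hsub
      have hgsum : csumA A g = 0 := by
        have : g = f + ((fun q => if q = c then 1 else 0) +
            (fun q => if q = c' then 1 else 0)) := by
          funext q; simp [hg]; ring
        rw [this, csumA_add, csumA_add, hf, csumA_Xind, csumA_Xind, hrow']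
        funext j
        simp only [Pi.add_apply, Pi.zero_apply, zero_add]
        split_ifs <;> decide
      have hgmem := ih _ hcard' g rfl hgsum
      have hgen : Zop c + Zop c' ∈ gaugeBS A := by
        apply Submodule.subset_span
        exact ⟨c, c', fun hh => hne hh.symm, Or.inr ⟨hrow'.symm, rfl⟩⟩
      have := Submodule.add_mem _ hgmem hgen
      convert this using 1
      funext q
      show ((0:F2), f q) = ((fun c => ((0:F2), g c)) + (Zop c + Zop c')) q
      have : ((fun c => ((0:F2), g c)) + (Zop c + Zop c')) q =
          (0, g q + ((if q = c then 1 else 0) + (if q = c' then 1 else 0))) := by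
        simp [Zop_apply, Prod.ext_iff]
        split_ifs <;> simp
      rw [this]
      refine Prod.ext rfl ?_
      show f q = g q + ((if q = c then 1 else 0) + (if q = c' then 1 else 0))
      simp only [hg]
      generalize (if q = c then (1:F2) else 0) = a
      generalize (if q = c' then (1:F2) else 0) = b
      generalize f q = x
      revert x a b
      decide

lemma LmapA_Xop (c : QA A) :
    LmapA A (Xop c) = ((fun i => if c.1.1 = i then 1 else 0), 0) := by
  rw [LmapA_apply]
  refine Prod.ext ?_ ?_
  · show rsumA A (fun q => ((if q = c then ((1:F2),(0:F2)) else 0)).1) = _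
    have : (fun q : QA A => ((if q = c then ((1:F2),(0:F2)) else 0)).1) =
        (fun q => if q = c then 1 else 0) := by
      funext q; split_ifs <;> rfl
    rw [this, rsumA_Xind]
  · show csumA A (fun q => ((if q = c then ((1:F2),(0:F2)) else 0)).2) = 0
    have : (fun q : QA A => ((if q = c then ((1:F2),(0:F2)) else 0)).2) =
        (fun _ => 0) := by
      funext q; split_ifs <;> rfl
    rw [this]
    funext j
    simp [csumA]

lemma LmapA_Zop (c : QA A) :
    LmapA A (Zop c) = (0, (fun j => if c.1.2 = j then 1 else 0)) := by
  rw [LmapA_apply]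
  refine Prod.ext ?_ ?_
  · show rsumA A (fun q => ((if q = c then ((0:F2),(1:F2)) else 0)).1) = 0
    have : (fun q : QA A => ((if q = c then ((0:F2),(1:F2)) else 0)).1) =
        (fun _ => 0) := by
      funext q; split_ifs <;> rfl
    rw [this]
    funext i
    simp [rsumA]
  · show csumA A (fun q => ((if q = c then ((0:F2),(1:F2)) else 0)).2) = _
    have : (fun q : QA A => ((if q = c then ((0:F2),(1:F2)) else 0)).2) =
        (fun q => if q = c then 1 else 0) := by
      funext q; split_ifs <;> rfl
    rw [this, csumA_Xind]

/-- Membership in the gauge group is equivalent to vanishing of `LmapA`. -/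
lemma mem_gauge_iff (v : PauliSpace (QA A)) : v ∈ gaugeBS A ↔ LmapA A v = 0 := by
  constructor
  · intro hv
    have hle : gaugeBS A ≤ LinearMap.ker (LmapA A) := by
      rw [gaugeBS, Submodule.span_le]
      rintro w ⟨c, c', hne, hcase⟩
      rcases hcase with ⟨hrr, rfl⟩ | ⟨hcc, rfl⟩
      · rw [SetLike.mem_coe, LinearMap.mem_ker, map_add, LmapA_Xop, LmapA_Xop, hrr]
        refine Prod.ext ?_ ?_ <;> funext i <;>
          simp [Prod.fst_add, Prod.snd_add] <;> split_ifs <;> simp [F2_add_self]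
      · rw [SetLike.mem_coe, LinearMap.mem_ker, map_add, LmapA_Zop, LmapA_Zop, hcc]
        refine Prod.ext ?_ ?_ <;> funext i <;>
          simp [Prod.fst_add, Prod.snd_add] <;> split_ifs <;> simp [F2_add_self]
    exact hle hv
  · intro hv
    have h1 : (fun c => ((v c).1, (0:F2))) ∈ gaugeBS A := by
      apply xvec_mem_gauge A _ _ rfl
      have := congrArg Prod.fst hv
      exact this
    have h2 : (fun c => ((0:F2), (v c).2)) ∈ gaugeBS A := by
      apply zvec_mem_gauge A _ _ rfl
      have := congrArg Prod.snd hv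
      exact this
    have := Submodule.add_mem _ h1 h2
    convert this using 1
    funext q
    refine Prod.ext ?_ ?_
    · show (v q).1 = (v q).1 + 0
      rw [add_zero]
    · show (v q).2 = 0 + (v q).2
      rw [zero_add]

end BSAux3
section BSAux4

variable {m : ℕ} (A : Matrix (Fin m) (Fin m) F2)

/-- Characterization of the centralizer of the gauge group. -/
lemma mem_pcent_gauge_iff (v : PauliSpace (QA A)) :
    v ∈ pcent (gaugeBS A) ↔ ∃ x z, v = PXop A x + PZop A z := by
  constructor
  · intro hv
    rw [gaugeBS, mem_pcent_span] at hv
    -- v_X is constant on columns and v_Z is constant on rows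
    have hcol : ∀ c c' : QA A, c.1.2 = c'.1.2 → (v c).1 = (v c').1 := by
      intro c c' hcc
      rcases eq_or_ne c c' with rfl | hne
      · rfl
      · have := hv (Zop c + Zop c') ⟨c, c', hne, Or.inr ⟨hcc, rfl⟩⟩
        rw [omegaF_add_right, omegaF_Zop, omegaF_Zop] at this
        exact F2_add_eq_zero.1 this
    have hrow : ∀ c c' : QA A, c.1.1 = c'.1.1 → (v c).2 = (v c').2 := by
      intro c c' hcc
      rcases eq_or_ne c c' with rfl | hne
      · rfl
      · have := hv (Xop c + Xop c') ⟨c, c', hne, Or.inl ⟨hcc, rfl⟩⟩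
        rw [omegaF_add_right, omegaF_Xop, omegaF_Xop] at this
        exact F2_add_eq_zero.1 this
    classical
    obtain ⟨x, hx⟩ : ∃ x : Fin m → F2, ∀ q : QA A, x q.1.2 = (v q).1 := by
      refine ⟨fun j => if h : ∃ c : QA A, c.1.2 = j then (v h.choose).1 else 0, fun q => ?_⟩
      beta_reduce
      rw [dif_pos ⟨q, rfl⟩]
      exact hcol _ _ (Exists.choose_spec (⟨q, rfl⟩ : ∃ c : QA A, c.1.2 = q.1.2))
    obtain ⟨z, hz⟩ : ∃ z : Fin m → F2, ∀ q : QA A, z q.1.1 = (v q).2 := by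
      refine ⟨fun i => if h : ∃ c : QA A, c.1.1 = i then (v h.choose).2 else 0, fun q => ?_⟩
      beta_reduce
      rw [dif_pos ⟨q, rfl⟩]
      exact hrow _ _ (Exists.choose_spec (⟨q, rfl⟩ : ∃ c : QA A, c.1.1 = q.1.1))
    refine ⟨x, z, ?_⟩
    funext q
    rw [PXZ_apply, hx q, hz q]
  · rintro ⟨x, z, rfl⟩
    rw [gaugeBS, mem_pcent_span]
    rintro g ⟨c, c', hne, hcase⟩
    rcases hcase with ⟨hrr, rfl⟩ | ⟨hcc, rfl⟩
    · rw [omegaF_add_right, omegaF_Xop, omegaF_Xop, PXZ_apply, PXZ_apply]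
      show z c.1.1 + z c'.1.1 = 0
      rw [hrr, F2_add_self]
    · rw [omegaF_add_right, omegaF_Zop, omegaF_Zop, PXZ_apply, PXZ_apply]
      show x c.1.2 + x c'.1.2 = 0
      rw [hcc, F2_add_self]

/-- Reindexing sums over qubits as sums over all matrix positions. -/
lemma sum_QA (g : Fin m × Fin m → F2) :
    ∑ c : QA A, g c.1 = ∑ p : Fin m × Fin m, A p.1 p.2 * g p := by
  classical
  have h1 : ∑ c : QA A, g c.1 = ∑ c : QA A, A c.1.1 c.1.2 * g c.1 :=
    Finset.sum_congr rfl (fun c _ => by rw [c.2, one_mul])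
  rw [h1, ← Finset.sum_subtype
    (Finset.univ.filter (fun p : Fin m × Fin m => A p.1 p.2 = 1))
    (fun p => by simp) (fun p => A p.1 p.2 * g p)]
  rw [Finset.sum_filter_of_ne]
  intro p _ hne
  by_contra h
  rcases F2_cases (A p.1 p.2) with h1 | h1
  · rw [h1, zero_mul] at hne; exact hne rfl
  · exact h h1

lemma rsumA_PX (x : Fin m → F2) : rsumA A (fun c => x c.1.2) = A *ᵥ x := by
  funext i
  unfold rsumA
  rw [sum_QA A (fun p => if p.1 = i then x p.2 else 0)]
  rw [show (A *ᵥ x) i = ∑ j, A i j * x j from rfl]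
  rw [Fintype.sum_prod_type]
  rw [Finset.sum_eq_single i]
  · apply Finset.sum_congr rfl
    intro j _
    rw [if_pos rfl]
  · intro b _ hb
    apply Finset.sum_eq_zero
    intro j _
    rw [if_neg hb, mul_zero]
  · intro h; exact absurd (Finset.mem_univ _) h

lemma csumA_PZ (z : Fin m → F2) : csumA A (fun c => z c.1.1) = Aᵀ *ᵥ z := by
  funext j
  unfold csumA
  rw [sum_QA A (fun p => if p.2 = j then z p.1 else 0)]
  rw [show (Aᵀ *ᵥ z) j = ∑ i, A i j * z i from rfl]
  rw [Fintype.sum_prod_type]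
  apply Finset.sum_congr rfl
  intro i _
  rw [Finset.sum_eq_single j]
  · rw [if_pos rfl]
  · intro b _ hb
    rw [if_neg hb, mul_zero]
  · intro h; exact absurd (Finset.mem_univ _) h

lemma rsumA_zero_of (f : QA A → F2) (h : ∀ c, f c = 0) : rsumA A f = 0 := by
  funext i
  unfold rsumA
  rw [Finset.sum_eq_zero, Pi.zero_apply]
  intro c _
  rw [h c, ite_self]

lemma LmapA_PXZ (x z : Fin m → F2) :
    LmapA A (PXop A x + PZop A z) = (A *ᵥ x, Aᵀ *ᵥ z) := by
  rw [LmapA_apply]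
  refine Prod.ext ?_ ?_
  · show rsumA A (fun c => ((PXop A x + PZop A z) c).1) = _
    have : (fun c : QA A => ((PXop A x + PZop A z) c).1) = fun c => x c.1.2 := by
      funext c; rw [PXZ_apply]
    rw [this, rsumA_PX]
  · show csumA A (fun c => ((PXop A x + PZop A z) c).2) = _
    have : (fun c : QA A => ((PXop A x + PZop A z) c).2) = fun c => z c.1.1 := by
      funext c; rw [PXZ_apply]
    rw [this, csumA_PZ]

/-- Characterization of the stabilizer. -/
lemma mem_pstab_iff (s : PauliSpace (QA A)) :
    s ∈ pstab (gaugeBS A) ↔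
      ∃ x z, A *ᵥ x = 0 ∧ Aᵀ *ᵥ z = 0 ∧ s = PXop A x + PZop A z := by
  rw [pstab, Submodule.mem_inf]
  constructor
  · rintro ⟨hg, hc⟩
    obtain ⟨x, z, rfl⟩ := (mem_pcent_gauge_iff A s).1 hc
    rw [mem_gauge_iff, LmapA_PXZ] at hg
    exact ⟨x, z, congrArg Prod.fst hg, congrArg Prod.snd hg, rfl⟩
  · rintro ⟨x, z, hx, hz, rfl⟩
    refine ⟨?_, (mem_pcent_gauge_iff A _).2 ⟨x, z, rfl⟩⟩
    rw [mem_gauge_iff, LmapA_PXZ, hx, hz]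
    rfl

/-- The symplectic form against an element of the centralizer. -/
lemma omega_PXZ (v : PauliSpace (QA A)) (x z : Fin m → F2) :
    omegaF v (PXop A x + PZop A z) =
      (LmapA A v).1 ⬝ᵥ z + (LmapA A v).2 ⬝ᵥ x := by
  unfold omegaF
  have h1 : ∀ q : QA A, (v q).1 * ((PXop A x + PZop A z) q).2 +
      (v q).2 * ((PXop A x + PZop A z) q).1 =
      (v q).1 * z q.1.1 + (v q).2 * x q.1.2 := by
    intro q; rw [PXZ_apply]
  rw [Finset.sum_congr rfl (fun q _ => h1 q), Finset.sum_add_distrib]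
  congr 1
  · show _ = ∑ i, (rsumA A (fun c => (v c).1)) i * z i
    unfold rsumA
    have h2 : ∀ i, (∑ c : QA A, if c.1.1 = i then (v c).1 else 0) * z i =
        ∑ c : QA A, (if c.1.1 = i then (v c).1 * z i else 0) := by
      intro i
      rw [Finset.sum_mul]
      exact Finset.sum_congr rfl (fun c _ => by rw [ite_mul, zero_mul])
    rw [Finset.sum_congr rfl (fun i _ => h2 i), Finset.sum_comm]
    apply Finset.sum_congr rfl
    intro c _
    rw [Finset.sum_ite_eq univ c.1.1 (fun i => (v c).1 * z i), if_pos (Finset.mem_univ _)]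
  · show _ = ∑ j, (csumA A (fun c => (v c).2)) j * x j
    unfold csumA
    have h2 : ∀ j, (∑ c : QA A, if c.1.2 = j then (v c).2 else 0) * x j =
        ∑ c : QA A, (if c.1.2 = j then (v c).2 * x j else 0) := by
      intro j
      rw [Finset.sum_mul]
      exact Finset.sum_congr rfl (fun c _ => by rw [ite_mul, zero_mul])
    rw [Finset.sum_congr rfl (fun j _ => h2 j), Finset.sum_comm]
    apply Finset.sum_congr rfl
    intro c _
    rw [Finset.sum_ite_eq univ c.1.2 (fun j => (v c).2 * x j), if_pos (Finset.mem_univ _)]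

end BSAux4
section Duality

/-- A vector orthogonal to the kernel of `B` lies in the range of `Bᵀ`. -/
lemma perp_ker_mem_range {m : ℕ} (B : Matrix (Fin m) (Fin m) F2) (u : Fin m → F2)
    (h : ∀ y, B *ᵥ y = 0 → u ⬝ᵥ y = 0) : ∃ w, Bᵀ *ᵥ w = u := by
  classical
  set f : (Fin m → F2) →ₗ[F2] F2 :=
    { toFun := fun y => u ⬝ᵥ y
      map_add' := fun a b => dotProduct_add u a b
      map_smul' := fun r a => by
        simp [dotProduct_smul, smul_eq_mul] } with hf
  have hker : LinearMap.ker B.mulVecLin ≤ LinearMap.ker f := by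
    intro y hy
    rw [LinearMap.mem_ker] at hy ⊢
    exact h y hy
  set fq : ((Fin m → F2) ⧸ LinearMap.ker B.mulVecLin) →ₗ[F2] F2 :=
    (LinearMap.ker B.mulVecLin).liftQ f hker with hfq
  set e := B.mulVecLin.quotKerEquivRange with he
  set fr : LinearMap.range B.mulVecLin →ₗ[F2] F2 := fq ∘ₗ (e.symm : _ →ₗ[F2] _) with hfr
  obtain ⟨g, hg⟩ := LinearMap.exists_extend fr
  have key : ∀ y, g (B *ᵥ y) = u ⬝ᵥ y := by
    intro y
    have h1 : g (B *ᵥ y) = fr ⟨B.mulVecLin y, LinearMap.mem_range_self _ y⟩ := by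
      rw [← hg]; rfl
    rw [h1, hfr]
    show fq (e.symm ⟨B.mulVecLin y, LinearMap.mem_range_self _ y⟩) = u ⬝ᵥ y
    have h2 : e (Submodule.Quotient.mk y) =
        ⟨B.mulVecLin y, LinearMap.mem_range_self _ y⟩ :=
      Subtype.ext (B.mulVecLin.quotKerEquivRange_apply_mk y)
    rw [← h2, e.symm_apply_apply]
    exact Submodule.liftQ_apply _ f y
  set w : Fin m → F2 := fun i => g (fun j => if i = j then 1 else 0) with hw
  refine ⟨w, ?_⟩
  funext i
  have h4 := key (fun j => if i = j then (1:F2) else 0)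
  have h5 : g (B *ᵥ fun j => if i = j then (1:F2) else 0) =
      w ⬝ᵥ (B *ᵥ fun j => if i = j then (1:F2) else 0) := by
    rw [LinearMap.pi_apply_eq_sum_univ g]
    unfold dotProduct
    apply Finset.sum_congr rfl
    intro k _
    rw [smul_eq_mul, mul_comm]
  have h6 : w ⬝ᵥ (B *ᵥ fun j => if i = j then (1:F2) else 0) =
      (Bᵀ *ᵥ w) ⬝ᵥ (fun j => if i = j then (1:F2) else 0) := by
    rw [Matrix.dotProduct_mulVec]
    congr 1
    rw [← Matrix.transpose_transpose B, Matrix.vecMul_transpose, Matrix.transpose_transpose]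
  have h7 : ∀ a : Fin m → F2, a ⬝ᵥ (fun j => if i = j then (1:F2) else 0) = a i := by
    intro a
    unfold dotProduct
    rw [Finset.sum_eq_single i]
    · beta_reduce; rw [if_pos rfl, mul_one]
    · intro b _ hb; beta_reduce; rw [if_neg (fun hh => hb hh.symm), mul_zero]
    · intro hh; exact absurd (Finset.mem_univ _) hh
  rw [← h7 (Bᵀ *ᵥ w), ← h6, ← h5, h4, h7 u]

/-- `Submodule.prod` is equivalent to the product of the submodules. -/
def myProdEquiv {R M N : Type*} [CommRing R] [AddCommGroup M] [AddCommGroup N]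
    [Module R M] [Module R N] (p : Submodule R M) (q : Submodule R N) :
    ↥(p.prod q) ≃ₗ[R] p × q where
  toFun x := (⟨x.1.1, x.2.1⟩, ⟨x.1.2, x.2.2⟩)
  invFun x := ⟨(x.1.1, x.2.1), ⟨x.1.2, x.2.2⟩⟩
  left_inv x := rfl
  right_inv x := rfl
  map_add' x y := rfl
  map_smul' r x := rfl

end Duality
set_option synthInstance.maxHeartbeats 1000000
set_option maxHeartbeats 2000000
section Parts12

variable {m : ℕ} (A : Matrix (Fin m) (Fin m) F2)

lemma card_QA : Fintype.card (QA A) = nnz A := by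
  rw [Fintype.card_subtype]
  unfold nnz
  apply Finset.card_bij (fun p _ => p)
  · intro p hp
    rw [Finset.mem_filter] at hp ⊢
    exact ⟨hp.1, by rw [hp.2]; exact one_ne_zero⟩
  · intro p q _ _ h; exact h
  · intro p hp
    rw [Finset.mem_filter] at hp
    exact ⟨p, Finset.mem_filter.2 ⟨hp.1, F2_ne_zero hp.2⟩, rfl⟩

lemma ker_LmapA : LinearMap.ker (LmapA A) = gaugeBS A := by
  ext v
  rw [LinearMap.mem_ker, mem_gauge_iff]

lemma map_LmapA_pcent :
    Submodule.map (LmapA A) (pcent (gaugeBS A)) =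
      (LinearMap.range A.mulVecLin).prod (LinearMap.range Aᵀ.mulVecLin) := by
  ext p
  simp only [Submodule.mem_map, Submodule.mem_prod]
  constructor
  · rintro ⟨v, hv, rfl⟩
    obtain ⟨x, z, rfl⟩ := (mem_pcent_gauge_iff A v).1 hv
    rw [LmapA_PXZ]
    exact ⟨⟨x, rfl⟩, ⟨z, rfl⟩⟩
  · rintro ⟨⟨x, hx⟩, ⟨z, hz⟩⟩
    refine ⟨PXop A x + PZop A z, (mem_pcent_gauge_iff A _).2 ⟨x, z, rfl⟩, ?_⟩
    rw [LmapA_PXZ]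
    exact Prod.ext hx hz

lemma dim_count :
    Module.finrank F2 ↥(pcent (gaugeBS A)) =
      Module.finrank F2 ↥(pstab (gaugeBS A)) + 2 * A.rank := by
  classical
  set C := pcent (gaugeBS A) with hC
  set f := (LmapA A).domRestrict C with hfdef
  have hrn := LinearMap.finrank_range_add_finrank_ker f
  have hker : LinearMap.ker f = Submodule.comap C.subtype (pstab (gaugeBS A)) := by
    rw [hfdef, LinearMap.ker_domRestrict, ker_LmapA]
    ext x
    simp only [Submodule.mem_comap, pstab, Submodule.mem_inf]
    exact ⟨fun h => ⟨h, x.2⟩, fun h => h.1⟩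
  have hkerdim : Module.finrank F2 ↥(LinearMap.ker f) =
      Module.finrank F2 ↥(pstab (gaugeBS A)) := by
    rw [hker]
    exact (Submodule.comapSubtypeEquivOfLe
      (inf_le_right : gaugeBS A ⊓ pcent (gaugeBS A) ≤ C)).finrank_eq
  have hrange : LinearMap.range f =
      (LinearMap.range A.mulVecLin).prod (LinearMap.range Aᵀ.mulVecLin) := by
    rw [hfdef, LinearMap.range_domRestrict, map_LmapA_pcent]
  have hrangedim : Module.finrank F2 ↥(LinearMap.range f) = 2 * A.rank := by
    rw [hrange]
    rw [(myProdEquiv (LinearMap.range A.mulVecLin) (LinearMap.range Aᵀ.mulVecLin)).finrank_eq]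
    rw [Module.finrank_prod]
    have h1 : A.rank = Module.finrank F2 ↥(LinearMap.range A.mulVecLin) := rfl
    have h2 : Aᵀ.rank = Module.finrank F2 ↥(LinearMap.range Aᵀ.mulVecLin) := rfl
    rw [← h1, ← h2, Matrix.rank_transpose]
    omega
  omega

end Parts12
section Part3a

variable {m : ℕ} (A : Matrix (Fin m) (Fin m) F2)

lemma PXop_zero : PXop A 0 = 0 := by
  unfold PXop
  simp

lemma PZop_zero : PZop A 0 = 0 := by
  unfold PZop
  simp

lemma hwt_fst_le (v : PauliSpace (QA A)) : hwt (LmapA A v).1 ≤ pwt v := by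
  unfold hwt pwt
  refine le_trans (Finset.card_le_card ?_) (Finset.card_image_le
    (s := psupp v) (f := fun c : QA A => c.1.1))
  intro i hi
  rw [Finset.mem_filter] at hi
  have hsum : (∑ c : QA A, if c.1.1 = i then (v c).1 else 0) ≠ 0 := hi.2
  obtain ⟨c, _, hc⟩ := Finset.exists_ne_zero_of_sum_ne_zero hsum
  have h1 : c.1.1 = i := by
    by_contra h; rw [if_neg h] at hc; exact hc rfl
  rw [if_pos h1] at hc
  refine Finset.mem_image.2 ⟨c, ?_, h1⟩
  rw [psupp, Finset.mem_filter]
  exact ⟨Finset.mem_univ _, fun h => hc (by rw [h])⟩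

lemma hwt_snd_le (v : PauliSpace (QA A)) : hwt (LmapA A v).2 ≤ pwt v := by
  unfold hwt pwt
  refine le_trans (Finset.card_le_card ?_) (Finset.card_image_le
    (s := psupp v) (f := fun c : QA A => c.1.2))
  intro j hj
  rw [Finset.mem_filter] at hj
  have hsum : (∑ c : QA A, if c.1.2 = j then (v c).2 else 0) ≠ 0 := hj.2
  obtain ⟨c, _, hc⟩ := Finset.exists_ne_zero_of_sum_ne_zero hsum
  have h1 : c.1.2 = j := by
    by_contra h; rw [if_neg h] at hc; exact hc rfl
  rw [if_pos h1] at hc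
  refine Finset.mem_image.2 ⟨c, ?_, h1⟩
  rw [psupp, Finset.mem_filter]
  refine ⟨Finset.mem_univ _, fun h => hc ?_⟩
  rw [h]

lemma Ccol_eq : Ccol A = LinearMap.range A.mulVecLin := (Matrix.range_mulVecLin A).symm

lemma Crow_eq : Crow A = LinearMap.range Aᵀ.mulVecLin := by
  rw [Matrix.range_mulVecLin]; rfl

/-- Lower bound on the weight of dressed logical operators. -/
lemma dist_lower (v : PauliSpace (QA A)) (hv : v ∈ pcent (pstab (gaugeBS A)))
    (hng : v ∉ gaugeBS A) : min (drow A) (dcol A) ≤ pwt v := by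
  have hperp1 : ∀ z, Aᵀ *ᵥ z = 0 → (LmapA A v).1 ⬝ᵥ z = 0 := by
    intro z hz
    have hs : PZop A z ∈ pstab (gaugeBS A) := (mem_pstab_iff A _).2
      ⟨0, z, by rw [Matrix.mulVec_zero], hz, by rw [PXop_zero, zero_add]⟩
    have h0 := hv (PZop A z) hs
    rw [show PZop A z = PXop A 0 + PZop A z by rw [PXop_zero, zero_add], omega_PXZ] at h0
    rwa [dotProduct_zero, add_zero] at h0
  have hperp2 : ∀ x, A *ᵥ x = 0 → (LmapA A v).2 ⬝ᵥ x = 0 := by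
    intro x hx
    have hs : PXop A x ∈ pstab (gaugeBS A) := (mem_pstab_iff A _).2
      ⟨x, 0, hx, by rw [Matrix.mulVec_zero], by rw [PZop_zero, add_zero]⟩
    have h0 := hv (PXop A x) hs
    rw [show PXop A x = PXop A x + PZop A 0 by rw [PZop_zero, add_zero], omega_PXZ] at h0
    rwa [dotProduct_zero, zero_add] at h0
  have hne : LmapA A v ≠ 0 := fun h => hng ((mem_gauge_iff A v).2 h)
  rcases (by
    by_contra hcon
    push_neg at hcon
    exact hne (Prod.ext hcon.1 hcon.2) : (LmapA A v).1 ≠ 0 ∨ (LmapA A v).2 ≠ 0) with h | h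
  · -- X part nonzero: weight at least dcol
    obtain ⟨w1, hw1⟩ := perp_ker_mem_range Aᵀ (LmapA A v).1
      (fun y hy => hperp1 y hy)
    have hmem : (LmapA A v).1 ∈ Ccol A := by
      rw [Ccol_eq]
      rw [Matrix.transpose_transpose] at hw1
      exact ⟨w1, by rw [Matrix.mulVecLin_apply]; exact hw1⟩
    have hle : dcol A ≤ hwt (LmapA A v).1 :=
      Nat.sInf_le ⟨(LmapA A v).1, hmem, h, rfl⟩
    exact le_trans (min_le_right _ _) (le_trans hle (hwt_fst_le A v))
  · obtain ⟨w1, hw1⟩ := perp_ker_mem_range A (LmapA A v).2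
      (fun y hy => hperp2 y hy)
    have hmem : (LmapA A v).2 ∈ Crow A := by
      rw [Crow_eq]
      exact ⟨w1, by rw [Matrix.mulVecLin_apply]; exact hw1⟩
    have hle : drow A ≤ hwt (LmapA A v).2 :=
      Nat.sInf_le ⟨(LmapA A v).2, hmem, h, rfl⟩
    exact le_trans (min_le_left _ _) (le_trans hle (hwt_snd_le A v))

end Part3a
section Part3b

variable {m : ℕ} (A : Matrix (Fin m) (Fin m) F2)

lemma mem_psupp {Q : Type} [Fintype Q] [DecidableEq Q] {v : PauliSpace Q} {q : Q} :
    q ∈ psupp v ↔ v q ≠ (0, 0) := by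
  unfold psupp
  rw [Finset.mem_filter]
  exact ⟨fun h => h.2, fun h => ⟨Finset.mem_univ _, h⟩⟩

/-- Construction of a minimum-weight X-type dressed logical operator. -/
lemma upperX (hm : 0 < m) (u : Fin m → F2) (hu : u ∈ LinearMap.range A.mulVecLin)
    (hune : u ≠ 0) :
    ∃ v, v ∈ pcent (pstab (gaugeBS A)) ∧ v ∉ gaugeBS A ∧ pwt v = hwt u := by
  classical
  obtain ⟨x0, hx0⟩ := hu
  rw [Matrix.mulVecLin_apply] at hx0
  set jp : Fin m → Fin m := fun i => if h : ∃ j, A i j ≠ 0 then h.choose else ⟨0, hm⟩ with hjp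
  have hjpA : ∀ i, u i ≠ 0 → A i (jp i) = 1 := by
    intro i hi
    have hex : ∃ j, A i j ≠ 0 := by
      by_contra hno
      push_neg at hno
      apply hi
      rw [← hx0]
      show ∑ j, A i j * x0 j = 0
      exact Finset.sum_eq_zero (fun j _ => by rw [hno j, zero_mul])
    show A i (if h : ∃ j, A i j ≠ 0 then h.choose else ⟨0, hm⟩) = 1
    rw [dif_pos hex]
    exact F2_ne_zero hex.choose_spec
  set v : PauliSpace (QA A) := fun c =>
    if u c.1.1 ≠ 0 ∧ c.1.2 = jp c.1.1 then (1, 0) else 0 with hv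
  have hv1 : ∀ c : QA A, (v c).1 = if u c.1.1 ≠ 0 ∧ c.1.2 = jp c.1.1 then 1 else 0 := by
    intro c; rw [hv]; beta_reduce; split_ifs <;> rfl
  have hv2 : ∀ c : QA A, (v c).2 = 0 := by
    intro c; rw [hv]; beta_reduce; split_ifs <;> rfl
  have hL : LmapA A v = (u, 0) := by
    rw [LmapA_apply]
    refine Prod.ext ?_ ?_
    · show rsumA A _ = u
      funext i
      show (∑ c : QA A, if c.1.1 = i then (v c).1 else 0) = u i
      rcases eq_or_ne (u i) 0 with hui | hui
      · rw [hui, Finset.sum_eq_zero]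
        intro c _
        split_ifs with hc
        · rw [hv1, if_neg]
          rintro ⟨hc1, _⟩
          exact hc1 (hc ▸ hui)
        · rfl
      · have hcell : A i (jp i) = 1 := hjpA i hui
        set c0 : QA A := ⟨(i, jp i), hcell⟩ with hc0
        have : ∀ c : QA A, (if c.1.1 = i then (v c).1 else 0) =
            (if c = c0 then 1 else 0) := by
          intro c
          rcases eq_or_ne c c0 with rfl | hne
          · rw [if_pos rfl, if_pos rfl, hv1, if_pos]
            exact ⟨by show u i ≠ 0; exact hui, rfl⟩
          · rw [if_neg hne]
            rcases eq_or_ne c.1.1 i with hci | hci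
            · rw [if_pos hci, hv1, if_neg]
              rintro ⟨_, hc2⟩
              apply hne
              apply Subtype.ext
              apply Prod.ext hci
              rw [hc2, hci]
            · rw [if_neg hci]
        rw [Finset.sum_congr rfl (fun c _ => this c), Finset.sum_ite_eq' univ c0, 
          if_pos (Finset.mem_univ _)]
        exact (F2_ne_zero hui).symm
    · show csumA A _ = 0
      funext j
      show (∑ c : QA A, if c.1.2 = j then (v c).2 else 0) = 0
      exact Finset.sum_eq_zero (fun c _ => by rw [hv2, ite_self])
  refine ⟨v, ?_, ?_, ?_⟩
  · intro s hs
    obtain ⟨x, z, hx, hz, rfl⟩ := (mem_pstab_iff A s).1 hs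
    rw [omega_PXZ, hL]
    show u ⬝ᵥ z + (0 : Fin m → F2) ⬝ᵥ x = 0
    rw [zero_dotProduct, add_zero, ← hx0, dotProduct_comm, Matrix.dotProduct_mulVec]
    have h2 : z ᵥ* A = Aᵀ *ᵥ z := by
      rw [← Matrix.transpose_transpose A, Matrix.vecMul_transpose, Matrix.transpose_transpose]
    rw [h2, hz, zero_dotProduct]
  · intro hgauge
    rw [mem_gauge_iff, hL] at hgauge
    exact hune (congrArg Prod.fst hgauge)
  · unfold pwt hwt
    refine Finset.card_bij' (fun c _ => c.1.1)
      (fun i hi => (⟨(i, jp i), hjpA i (Finset.mem_filter.1 hi).2⟩ : QA A))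
      ?_ ?_ ?_ ?_
    · intro c hc
      rw [mem_psupp] at hc
      rw [Finset.mem_filter]
      refine ⟨Finset.mem_univ _, ?_⟩
      intro h0
      apply hc
      rw [hv]
      beta_reduce
      rw [if_neg (by rintro ⟨hc1, _⟩; exact hc1 h0)]
      rfl
    · intro i hi
      rw [mem_psupp]
      rw [hv]
      beta_reduce
      rw [if_pos ⟨(Finset.mem_filter.1 hi).2, rfl⟩]
      intro h
      exact one_ne_zero (congrArg Prod.fst h)
    · intro c hc
      rw [mem_psupp] at hc
      have hcc : u c.1.1 ≠ 0 ∧ c.1.2 = jp c.1.1 := by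
        by_contra h0
        apply hc
        rw [hv]
        beta_reduce
        rw [if_neg h0]
        rfl
      exact Subtype.ext ((Prod.ext rfl hcc.2 : (c : Fin m × Fin m) = (c.1.1, jp c.1.1)).symm)
    · intro i hi
      rfl

end Part3b
section Part3c

variable {m : ℕ} (A : Matrix (Fin m) (Fin m) F2)

/-- Construction of a minimum-weight Z-type dressed logical operator. -/
lemma upperZ (hm : 0 < m) (u : Fin m → F2) (hu : u ∈ LinearMap.range Aᵀ.mulVecLin)
    (hune : u ≠ 0) :
    ∃ v, v ∈ pcent (pstab (gaugeBS A)) ∧ v ∉ gaugeBS A ∧ pwt v = hwt u := by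
  classical
  obtain ⟨z0, hz0⟩ := hu
  rw [Matrix.mulVecLin_apply] at hz0
  set ip : Fin m → Fin m := fun j => if h : ∃ i, A i j ≠ 0 then h.choose else ⟨0, hm⟩ with hip
  have hipA : ∀ j, u j ≠ 0 → A (ip j) j = 1 := by
    intro j hj
    have hex : ∃ i, A i j ≠ 0 := by
      by_contra hno
      push_neg at hno
      apply hj
      rw [← hz0]
      show ∑ i, Aᵀ j i * z0 i = 0
      exact Finset.sum_eq_zero (fun i _ => by
        show A i j * z0 i = 0
        rw [hno i, zero_mul])
    show A (if h : ∃ i, A i j ≠ 0 then h.choose else ⟨0, hm⟩) j = 1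
    rw [dif_pos hex]
    exact F2_ne_zero hex.choose_spec
  set v : PauliSpace (QA A) := fun c =>
    if u c.1.2 ≠ 0 ∧ c.1.1 = ip c.1.2 then (0, 1) else 0 with hv
  have hv1 : ∀ c : QA A, (v c).2 = if u c.1.2 ≠ 0 ∧ c.1.1 = ip c.1.2 then 1 else 0 := by
    intro c; rw [hv]; beta_reduce; split_ifs <;> rfl
  have hv2 : ∀ c : QA A, (v c).1 = 0 := by
    intro c; rw [hv]; beta_reduce; split_ifs <;> rfl
  have hL : LmapA A v = (0, u) := by
    rw [LmapA_apply]
    refine Prod.ext ?_ ?_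
    · show rsumA A _ = 0
      funext i
      show (∑ c : QA A, if c.1.1 = i then (v c).1 else 0) = 0
      exact Finset.sum_eq_zero (fun c _ => by rw [hv2, ite_self])
    · show csumA A _ = u
      funext j
      show (∑ c : QA A, if c.1.2 = j then (v c).2 else 0) = u j
      rcases eq_or_ne (u j) 0 with huj | huj
      · rw [huj, Finset.sum_eq_zero]
        intro c _
        split_ifs with hc
        · rw [hv1, if_neg]
          rintro ⟨hc1, _⟩
          exact hc1 (hc ▸ huj)
        · rfl
      · have hcell : A (ip j) j = 1 := hipA j huj
        set c0 : QA A := ⟨(ip j, j), hcell⟩ with hc0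
        have : ∀ c : QA A, (if c.1.2 = j then (v c).2 else 0) =
            (if c = c0 then 1 else 0) := by
          intro c
          rcases eq_or_ne c c0 with rfl | hne
          · rw [if_pos rfl, if_pos rfl, hv1, if_pos]
            exact ⟨by show u j ≠ 0; exact huj, rfl⟩
          · rw [if_neg hne]
            rcases eq_or_ne c.1.2 j with hci | hci
            · rw [if_pos hci, hv1, if_neg]
              rintro ⟨_, hc2⟩
              apply hne
              apply Subtype.ext
              refine Prod.ext ?_ hci
              rw [hc2, hci]
            · rw [if_neg hci]
        rw [Finset.sum_congr rfl (fun c _ => this c), Finset.sum_ite_eq' univ c0,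
          if_pos (Finset.mem_univ _)]
        exact (F2_ne_zero huj).symm
  refine ⟨v, ?_, ?_, ?_⟩
  · intro s hs
    obtain ⟨x, z, hx, hz, rfl⟩ := (mem_pstab_iff A s).1 hs
    rw [omega_PXZ, hL]
    show (0 : Fin m → F2) ⬝ᵥ z + u ⬝ᵥ x = 0
    rw [zero_dotProduct, zero_add, dotProduct_comm, ← hz0, Matrix.dotProduct_mulVec,
      Matrix.vecMul_transpose, hx, zero_dotProduct]
  · intro hgauge
    rw [mem_gauge_iff, hL] at hgauge
    exact hune (congrArg Prod.snd hgauge)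
  · unfold pwt hwt
    refine Finset.card_bij' (fun c _ => c.1.2)
      (fun j hj => (⟨(ip j, j), hipA j (Finset.mem_filter.1 hj).2⟩ : QA A))
      ?_ ?_ ?_ ?_
    · intro c hc
      rw [mem_psupp] at hc
      rw [Finset.mem_filter]
      refine ⟨Finset.mem_univ _, ?_⟩
      intro h0
      apply hc
      rw [hv]
      beta_reduce
      rw [if_neg (by rintro ⟨hc1, _⟩; exact hc1 h0)]
      rfl
    · intro j hj
      rw [mem_psupp]
      rw [hv]
      beta_reduce
      rw [if_pos ⟨(Finset.mem_filter.1 hj).2, rfl⟩]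
      intro h
      exact one_ne_zero (congrArg Prod.snd h)
    · intro c hc
      rw [mem_psupp] at hc
      have hcc : u c.1.2 ≠ 0 ∧ c.1.1 = ip c.1.2 := by
        by_contra h0
        apply hc
        rw [hv]
        beta_reduce
        rw [if_neg h0]
        rfl
      exact Subtype.ext ((Prod.ext hcc.2 rfl : (c : Fin m × Fin m) = (ip c.1.2, c.1.2)).symm)
    · intro j hj
      rfl

end Part3c
/-- Theorem 2 of the paper: the generalized Bacon-Shor code of a nonzero binary matrix `A`
has `|A|` physical qubits, `rank(A)` logical qubits, and distance `min(drow(A), dcol(A))`. -/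
theorem generalized_bacon_shor_parameters {m : ℕ} (A : Matrix (Fin m) (Fin m) F2)
    (hA : A ≠ 0) :
    Fintype.card (QA A) = nnz A ∧
    Module.finrank F2 ↥(pcent (gaugeBS A)) =
      Module.finrank F2 ↥(pstab (gaugeBS A)) + 2 * A.rank ∧
    (1 ≤ A.rank → sInf (distSet (gaugeBS A)) = min (drow A) (dcol A)) := by
  refine ⟨card_QA A, dim_count A, ?_⟩
  intro hrank
  have hm : 0 < m := by
    rcases Nat.eq_zero_or_pos m with h0 | h0
    · exfalso; apply hA; subst h0; funext i j; exact i.elim0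
    · exact h0
  have hcol_ne : ∃ u, u ∈ LinearMap.range A.mulVecLin ∧ u ≠ 0 := by
    by_contra hno
    push_neg at hno
    have hb : LinearMap.range A.mulVecLin = ⊥ := by
      rw [Submodule.eq_bot_iff]
      intro y hy
      exact hno y hy
    have hz : A.rank = 0 := by
      rw [show A.rank = Module.finrank F2 ↥(LinearMap.range A.mulVecLin) from rfl, hb,
        finrank_bot]
    omega
  have hrow_ne : ∃ u, u ∈ LinearMap.range Aᵀ.mulVecLin ∧ u ≠ 0 := by
    by_contra hno
    push_neg at hno
    have hb : LinearMap.range Aᵀ.mulVecLin = ⊥ := by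
      rw [Submodule.eq_bot_iff]
      intro y hy
      exact hno y hy
    have hz : Aᵀ.rank = 0 := by
      rw [show Aᵀ.rank = Module.finrank F2 ↥(LinearMap.range Aᵀ.mulVecLin) from rfl, hb,
        finrank_bot]
    rw [Matrix.rank_transpose] at hz
    omega
  -- minimum-weight codewords
  obtain ⟨u1, hu1, hu1ne⟩ := hcol_ne
  have hdcolset : {w | ∃ v ∈ Ccol A, v ≠ 0 ∧ hwt v = w}.Nonempty :=
    ⟨hwt u1, u1, by rw [Ccol_eq]; exact hu1, hu1ne, rfl⟩
  obtain ⟨uc, hucmem, hucne, hucw⟩ := Nat.sInf_mem hdcolset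
  obtain ⟨u2, hu2, hu2ne⟩ := hrow_ne
  have hdrowset : {w | ∃ v ∈ Crow A, v ≠ 0 ∧ hwt v = w}.Nonempty :=
    ⟨hwt u2, u2, by rw [Crow_eq]; exact hu2, hu2ne, rfl⟩
  obtain ⟨ur, hurmem, hurne, hurw⟩ := Nat.sInf_mem hdrowset
  have hucw' : hwt uc = dcol A := hucw
  have hurw' : hwt ur = drow A := hurw
  rw [Ccol_eq] at hucmem
  rw [Crow_eq] at hurmem
  obtain ⟨vc, hc1, hc2, hc3⟩ := upperX A hm uc hucmem hucne
  obtain ⟨vr, hr1, hr2, hr3⟩ := upperZ A hm ur hurmem hurne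
  have hne : (distSet (gaugeBS A)).Nonempty := ⟨pwt vc, vc, hc1, hc2, rfl⟩
  apply le_antisymm
  · rcases le_total (drow A) (dcol A) with hle | hle
    · apply Nat.sInf_le
      exact ⟨vr, hr1, hr2, by rw [hr3, hurw', min_eq_left hle]⟩
    · apply Nat.sInf_le
      exact ⟨vc, hc1, hc2, by rw [hc3, hucw', min_eq_right hle]⟩
  · obtain ⟨v, hv1, hv2, hv3⟩ := Nat.sInf_mem hne
    rw [← hv3]
    exact dist_lower A v hv1 hv2
end

section
/- Let α > 0 and 0 < β < 1/2 be real constants with α + H₂(β) < 1, where H₂ is the binary entropy function. Then there exists m₀ such that for all integers m ≥ m₀ and all natural numbers k with k ≤ α·m there exists an m×m matrix A over F₂ with rank(A) = k such that every nonzero vector of Ccol(A) has Hamming weight at least β·m and every nonzero vector of Crow(A) has Hamming weight at least β·m. -/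
set_option linter.unusedSectionVars false

open Finset Matrix

section GVaux

open Real Finset

lemma hwt_le_card {m : ℕ} (v : Fin m → F2) : hwt v ≤ m := by
  classical
  simpa [hwt] using (Finset.card_filter_le Finset.univ (fun i => v i ≠ 0))

lemma hwt_zero {m : ℕ} : hwt (0 : Fin m → F2) = 0 := by
  simp [hwt]

/-- Pointwise entropy bound: if `w ≤ β m` then `2^(-H2(β)m) ≤ β^w (1-β)^(m-w)`. -/
lemma entropy_point {β : ℝ} (hβ0 : 0 < β) (hβ : β < 1 / 2) {m w : ℕ}
    (hw : (w : ℝ) ≤ β * m) (hwm : w ≤ m) :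
    (2 : ℝ) ^ (-(H2 β * m)) ≤ β ^ w * (1 - β) ^ (m - w) := by
  have h1β : 0 < 1 - β := by linarith
  set lb := Real.logb 2 β with hlbdef
  set lc := Real.logb 2 (1 - β) with hlcdef
  have hb : (2 : ℝ) ^ lb = β := Real.rpow_logb (by norm_num) (by norm_num) hβ0
  have hc : (2 : ℝ) ^ lc = 1 - β := Real.rpow_logb (by norm_num) (by norm_num) h1β
  have hcast : ((m - w : ℕ) : ℝ) = (m : ℝ) - w := by
    rw [Nat.cast_sub hwm]
  have hlb : lb ≤ lc := Real.logb_le_logb_of_le (by norm_num) hβ0 (by linarith)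
  have key : -(H2 β * m) ≤ (w : ℝ) * lb + ((m : ℝ) - w) * lc := by
    have hprod : 0 ≤ (β * m - w) * (lc - lb) :=
      mul_nonneg (by linarith) (by linarith)
    have hH2 : H2 β = -β * lb - (1 - β) * lc := rfl
    nlinarith [hprod]
  calc (2 : ℝ) ^ (-(H2 β * m)) ≤ 2 ^ ((w : ℝ) * lb + ((m : ℝ) - w) * lc) :=
        Real.rpow_le_rpow_of_exponent_le (by norm_num) key
    _ = β ^ w * (1 - β) ^ (m - w) := by
        rw [Real.rpow_add (by norm_num)]
        congr 1
        · rw [mul_comm, Real.rpow_mul (by norm_num : (0:ℝ) ≤ 2), hb,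
            Real.rpow_natCast]
        · rw [mul_comm, Real.rpow_mul (by norm_num : (0:ℝ) ≤ 2), hc, ← hcast,
            Real.rpow_natCast]

/-- The binomial-type identity `∑_v β^{wt v} (1-β)^{m - wt v} = 1`. -/
lemma sum_weight_prod (β : ℝ) (m : ℕ) :
    ∑ v : Fin m → F2, β ^ (hwt v) * (1 - β) ^ (m - hwt v) = 1 := by
  classical
  have h := Finset.prod_univ_sum (fun _ : Fin m => (Finset.univ : Finset F2))
    (fun _ c => if c = 0 then (1 - β) else β)
  rw [Fintype.piFinset_univ] at h
  have hL : ∏ _i : Fin m, (∑ c : F2, if c = 0 then (1 - β) else β) = 1 := by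
    have : (∑ c : F2, if c = 0 then (1 - β) else β) = 1 := by
      rw [show (Finset.univ : Finset F2) = {0, 1} from rfl]
      norm_num
    rw [this, Finset.prod_const_one]
  have hR : ∀ v : Fin m → F2,
      (∏ i : Fin m, if v i = 0 then (1 - β) else β)
        = β ^ (hwt v) * (1 - β) ^ (m - hwt v) := by
    intro v
    rw [← Finset.prod_filter_mul_prod_filter_not Finset.univ (fun i => v i ≠ 0)]
    have h1 : (∏ i ∈ Finset.univ.filter (fun i => v i ≠ 0),
        if v i = 0 then (1 - β) else β) = β ^ (hwt v) := by
      rw [Finset.prod_congr rfl (fun i hi => by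
        simp only [Finset.mem_filter] at hi
        rw [if_neg hi.2]), Finset.prod_const]
      rfl
    have h2 : (∏ i ∈ Finset.univ.filter (fun i => ¬v i ≠ 0),
        if v i = 0 then (1 - β) else β) = (1 - β) ^ (m - hwt v) := by
      rw [Finset.prod_congr rfl (fun i hi => by
        simp only [Finset.mem_filter, not_not] at hi
        rw [if_pos hi.2]), Finset.prod_const]
      congr 1
      have hc := Finset.card_filter_add_card_filter_not
        (s := (Finset.univ : Finset (Fin m))) (p := fun i => v i ≠ 0)
      simp only [Finset.card_univ, Fintype.card_fin] at hc
      have hd : hwt v = (Finset.univ.filter (fun i => v i ≠ 0)).card := rfl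
      omega
    rw [h1, h2]
  rw [hL] at h
  calc ∑ v : Fin m → F2, β ^ (hwt v) * (1 - β) ^ (m - hwt v)
      = ∑ v : Fin m → F2, ∏ i : Fin m, if v i = 0 then (1 - β) else β :=
        Finset.sum_congr rfl (fun v _ => (hR v).symm)
    _ = 1 := h.symm

/-- Volume bound: the number of vectors of weight `< β m` is at most `2^(H2(β) m)`. -/
lemma card_low_weight_le {β : ℝ} (hβ0 : 0 < β) (hβ : β < 1 / 2) (m : ℕ) :
    (((Finset.univ.filter (fun v : Fin m → F2 => (hwt v : ℝ) < β * m)).card : ℝ))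
      ≤ (2 : ℝ) ^ (H2 β * m) := by
  classical
  set S := Finset.univ.filter (fun v : Fin m → F2 => (hwt v : ℝ) < β * m) with hS
  have h1β : 0 < 1 - β := by linarith
  have hterm : ∀ v ∈ S, (2 : ℝ) ^ (-(H2 β * m)) ≤ β ^ (hwt v) * (1 - β) ^ (m - hwt v) := by
    intro v hv
    rw [hS, Finset.mem_filter] at hv
    exact entropy_point hβ0 hβ (le_of_lt hv.2) (hwt_le_card v)
  have hsum : (S.card : ℝ) * (2 : ℝ) ^ (-(H2 β * m)) ≤ 1 := by
    calc (S.card : ℝ) * (2 : ℝ) ^ (-(H2 β * m))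
        = ∑ _v ∈ S, (2 : ℝ) ^ (-(H2 β * m)) := by rw [Finset.sum_const, nsmul_eq_mul]
      _ ≤ ∑ v ∈ S, β ^ (hwt v) * (1 - β) ^ (m - hwt v) := Finset.sum_le_sum hterm
      _ ≤ ∑ v : Fin m → F2, β ^ (hwt v) * (1 - β) ^ (m - hwt v) := by
          apply Finset.sum_le_sum_of_subset_of_nonneg (Finset.subset_univ S)
          intro v _ _
          positivity
      _ = 1 := sum_weight_prod β m
  have hpos : (0 : ℝ) < (2 : ℝ) ^ (-(H2 β * m)) := Real.rpow_pos_of_pos (by norm_num) _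
  calc (S.card : ℝ) ≤ 1 / (2 : ℝ) ^ (-(H2 β * m)) := (le_div_iff₀ hpos).mpr hsum
    _ = (2 : ℝ) ^ (H2 β * m) := by
        rw [Real.rpow_neg (by norm_num : (0:ℝ) ≤ 2), one_div, inv_inv]

/-- Fiber counting for a surjective additive hom between finite groups. -/
lemma card_filter_preimage_mul {M N : Type*} [AddCommGroup M] [AddCommGroup N]
    [Fintype M] [Fintype N] [DecidableEq N] (f : M →+ N) (hf : Function.Surjective f)
    (S : Finset N) :
    (Finset.univ.filter (fun B => f B ∈ S)).card * Fintype.card N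
      = Fintype.card M * S.card := by
  classical
  have fib : ∀ v : N, (Finset.univ.filter (fun B => f B = v)).card
      = (Finset.univ.filter (fun B => f B = (0 : N))).card := by
    intro v
    obtain ⟨B₀, hB₀⟩ := hf v
    apply Finset.card_nbij' (fun B => B - B₀) (fun B => B + B₀)
    · intro a ha
      simp only [Finset.coe_filter, Set.mem_setOf_eq, Finset.mem_filter, Finset.mem_univ, true_and] at ha ⊢
      rw [map_sub, ha, hB₀, sub_self]
    · intro a ha
      simp only [Finset.coe_filter, Set.mem_setOf_eq, Finset.mem_filter, Finset.mem_univ, true_and] at ha ⊢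
      rw [map_add, ha, hB₀, zero_add]
    · intro a _; exact sub_add_cancel a B₀
    · intro a _; exact add_sub_cancel_right a B₀
  have h1 : (Finset.univ.filter (fun B => f B ∈ S)).card
      = ∑ v ∈ S, (Finset.univ.filter (fun B : M => f B = v)).card := by
    rw [Finset.card_eq_sum_card_fiberwise
      (f := f) (s := Finset.univ.filter (fun B => f B ∈ S)) (t := S) (fun x hx => (Finset.mem_filter.mp hx).2)]
    apply Finset.sum_congr rfl
    intro v hv
    congr 1
    ext B
    simp only [Finset.mem_filter, Finset.mem_univ, true_and]
    constructor
    · rintro ⟨_, h⟩; exact h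
    · intro h; exact ⟨h ▸ hv, h⟩
  have h2 : Fintype.card M
      = ∑ v ∈ (Finset.univ : Finset N), (Finset.univ.filter (fun B : M => f B = v)).card := by
    rw [← Finset.card_univ (α := M)]
    exact Finset.card_eq_sum_card_fiberwise (fun x _ => Finset.mem_univ _)
  have h1' : (Finset.univ.filter (fun B => f B ∈ S)).card
      = S.card * (Finset.univ.filter (fun B : M => f B = (0 : N))).card := by
    rw [h1, Finset.sum_congr rfl (fun v _ => fib v), Finset.sum_const, smul_eq_mul]
  have h2' : Fintype.card M
      = Fintype.card N * (Finset.univ.filter (fun B : M => f B = (0 : N))).card := by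
    rw [h2, Finset.sum_congr rfl (fun v _ => fib v), Finset.sum_const, smul_eq_mul,
      Finset.card_univ]
  rw [h1', h2']
  ring

/-- Existence of a good generator matrix by counting. -/
lemma exists_good_matrix {β : ℝ} {m k : ℕ}
    (hlt : ((2 ^ k - 1 : ℕ))
        * (Finset.univ.filter (fun v : Fin m → F2 => (hwt v : ℝ) < β * m)).card
      < 2 ^ m) :
    ∃ B : Matrix (Fin m) (Fin k) F2,
      ∀ x : Fin k → F2, x ≠ 0 → β * m ≤ (hwt (B.mulVec x) : ℝ) := by
  classical
  set S := Finset.univ.filter (fun v : Fin m → F2 => (hwt v : ℝ) < β * m) with hSdef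
  set Bad := Finset.univ.filter
    (fun B : Matrix (Fin m) (Fin k) F2 => ∃ x, x ≠ 0 ∧ B.mulVec x ∈ S) with hBadDef
  have hone : ∀ a : F2, a ≠ 0 → a = 1 := by decide
  have hfiber : ∀ x : Fin k → F2, x ≠ 0 →
      (Finset.univ.filter (fun B : Matrix (Fin m) (Fin k) F2 => B.mulVec x ∈ S)).card
          * 2 ^ m
        = Fintype.card (Matrix (Fin m) (Fin k) F2) * S.card := by
    intro x hx
    have hj : ∃ j, x j ≠ 0 := by
      by_contra h
      push_neg at h
      exact hx (funext fun j => h j)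
    obtain ⟨j, hj⟩ := hj
    have hxj : x j = 1 := hone _ hj
    set f : Matrix (Fin m) (Fin k) F2 →+ (Fin m → F2) :=
      AddMonoidHom.mk' (fun B => B.mulVec x) (fun A B => Matrix.add_mulVec A B x) with hf
    have hsurj : Function.Surjective f := by
      intro v
      refine ⟨Matrix.of (fun i j' => if j' = j then v i else 0), ?_⟩
      funext i
      simp only [hf, AddMonoidHom.mk'_apply, Matrix.mulVec, dotProduct, Matrix.of_apply,
        ite_mul, zero_mul]
      rw [Finset.sum_ite_eq' Finset.univ j (fun j' => v i * x j')]
      simp [hxj]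
    have := card_filter_preimage_mul f hsurj S
    rwa [show Fintype.card (Fin m → F2) = 2 ^ m by
      rw [Fintype.card_fun, ZMod.card, Fintype.card_fin]] at this
  have hsub : Bad ⊆ (Finset.univ.filter (fun x : Fin k → F2 => x ≠ 0)).biUnion
      (fun x => Finset.univ.filter
        (fun B : Matrix (Fin m) (Fin k) F2 => B.mulVec x ∈ S)) := by
    intro B hB
    rw [hBadDef, Finset.mem_filter] at hB
    obtain ⟨_, x, hx, hmem⟩ := hB
    apply Finset.mem_biUnion.mpr
    exact ⟨x, Finset.mem_filter.mpr ⟨Finset.mem_univ _, hx⟩,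
      Finset.mem_filter.mpr ⟨Finset.mem_univ _, hmem⟩⟩
  have hcardx : (Finset.univ.filter (fun x : Fin k → F2 => x ≠ 0)).card = 2 ^ k - 1 := by
    rw [Finset.filter_ne', Finset.card_erase_of_mem (Finset.mem_univ _), Finset.card_univ,
      Fintype.card_fun, ZMod.card, Fintype.card_fin]
  have hbad : Bad.card * 2 ^ m < Fintype.card (Matrix (Fin m) (Fin k) F2) * 2 ^ m := by
    calc Bad.card * 2 ^ m
        ≤ (∑ x ∈ Finset.univ.filter (fun x : Fin k → F2 => x ≠ 0),
            (Finset.univ.filter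
              (fun B : Matrix (Fin m) (Fin k) F2 => B.mulVec x ∈ S)).card) * 2 ^ m := by
          apply Nat.mul_le_mul_right
          exact le_trans (Finset.card_le_card hsub) (Finset.card_biUnion_le)
      _ = ∑ x ∈ Finset.univ.filter (fun x : Fin k → F2 => x ≠ 0),
            (Finset.univ.filter
              (fun B : Matrix (Fin m) (Fin k) F2 => B.mulVec x ∈ S)).card * 2 ^ m := by
          rw [Finset.sum_mul]
      _ = ∑ _x ∈ Finset.univ.filter (fun x : Fin k → F2 => x ≠ 0),
            Fintype.card (Matrix (Fin m) (Fin k) F2) * S.card := by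
          apply Finset.sum_congr rfl
          intro x hx
          exact hfiber x (Finset.mem_filter.mp hx).2
      _ = (2 ^ k - 1) * (Fintype.card (Matrix (Fin m) (Fin k) F2) * S.card) := by
          rw [Finset.sum_const, smul_eq_mul, hcardx]
      _ = Fintype.card (Matrix (Fin m) (Fin k) F2) * ((2 ^ k - 1) * S.card) := by ring
      _ < Fintype.card (Matrix (Fin m) (Fin k) F2) * 2 ^ m := by
          exact Nat.mul_lt_mul_of_le_of_lt (le_refl _) hlt Fintype.card_pos
  have hbad' : Bad.card < Fintype.card (Matrix (Fin m) (Fin k) F2) :=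
    Nat.lt_of_mul_lt_mul_right hbad
  have : ∃ B : Matrix (Fin m) (Fin k) F2, B ∉ Bad := by
    by_contra h
    push_neg at h
    have : Bad = Finset.univ := Finset.eq_univ_iff_forall.mpr h
    rw [this, Finset.card_univ] at hbad'
    exact lt_irrefl _ hbad'
  obtain ⟨B, hB⟩ := this
  refine ⟨B, fun x hx => ?_⟩
  by_contra hcon
  push_neg at hcon
  apply hB
  rw [hBadDef, Finset.mem_filter]
  exact ⟨Finset.mem_univ _, x, hx, Finset.mem_filter.mpr ⟨Finset.mem_univ _, hcon⟩⟩

end GVaux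

/-- Gilbert-Varshamov bound for binary matrices: if `α + H₂(β) < 1`, then for all
sufficiently large `m` and all `k ≤ αm` there is an `m × m` binary matrix of rank `k`
whose row and column spaces both have minimum distance at least `βm`. -/
theorem gilbert_varshamov_matrices (α β : ℝ) (hα : 0 < α) (hβ0 : 0 < β) (hβ : β < 1 / 2)
    (hαβ : α + H2 β < 1) :
    ∃ m₀ : ℕ, ∀ m : ℕ, m₀ ≤ m → ∀ k : ℕ, (k : ℝ) ≤ α * m →
      ∃ A : Matrix (Fin m) (Fin m) F2, A.rank = k ∧
        (∀ v ∈ Ccol A, v ≠ 0 → β * m ≤ (hwt v : ℝ)) ∧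
        (∀ v ∈ Crow A, v ≠ 0 → β * m ≤ (hwt v : ℝ)) := by
  classical
  refine ⟨1, fun m hm k hk => ?_⟩
  rcases Nat.eq_zero_or_pos k with hk0 | hkpos
  · subst hk0
    have hz : ∀ v ∈ Submodule.span F2 (Set.range (0 : Matrix (Fin m) (Fin m) F2)),
        v = 0 := by
      intro v hv
      have hle : Submodule.span F2 (Set.range (0 : Matrix (Fin m) (Fin m) F2))
          ≤ (⊥ : Submodule F2 (Fin m → F2)) := by
        apply Submodule.span_le.mpr
        rintro _ ⟨i, rfl⟩
        exact Submodule.zero_mem _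
      simpa using hle hv
    refine ⟨0, by simp [Matrix.rank_zero], ?_, ?_⟩
    · intro v hv hv0
      exact absurd (hz v (by rwa [Ccol, Matrix.transpose_zero] at hv)) hv0
    · intro v hv hv0
      exact absurd (hz v hv) hv0
  · have hmpos : 0 < m := hm
    set S := Finset.univ.filter (fun v : Fin m → F2 => (hwt v : ℝ) < β * m) with hSdef
    have hβm : (0 : ℝ) < β * m := mul_pos hβ0 (by exact_mod_cast hmpos)
    have hS0 : (0 : Fin m → F2) ∈ S := by
      rw [hSdef, Finset.mem_filter]
      exact ⟨Finset.mem_univ _, by rw [hwt_zero]; exact_mod_cast hβm⟩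
    have hSpos : 0 < S.card := Finset.card_pos.mpr ⟨0, hS0⟩
    have hSle : (S.card : ℝ) ≤ (2 : ℝ) ^ (H2 β * m) := card_low_weight_le hβ0 hβ m
    have h2k : (((2 : ℕ) ^ k : ℕ) : ℝ) ≤ (2 : ℝ) ^ (α * m) := by
      rw [show (((2 : ℕ) ^ k : ℕ) : ℝ) = (2 : ℝ) ^ ((k : ℕ) : ℝ) by
        rw [Real.rpow_natCast]; push_cast; ring]
      exact Real.rpow_le_rpow_of_exponent_le (by norm_num) hk
    have hlt : ((2 ^ k - 1 : ℕ)) * S.card < 2 ^ m := by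
      have e0 : (2 ^ k - 1 : ℕ) < 2 ^ k := by
        have := Nat.one_le_two_pow (n := k); omega
      have hreal : ((2 ^ k - 1 : ℕ) : ℝ) * (S.card : ℝ) < (2 : ℝ) ^ (m : ℕ) := by
        calc ((2 ^ k - 1 : ℕ) : ℝ) * (S.card : ℝ)
            < (((2 : ℕ) ^ k : ℕ) : ℝ) * (S.card : ℝ) := by
              apply mul_lt_mul_of_pos_right _ (by exact_mod_cast hSpos)
              exact_mod_cast e0
          _ ≤ (2 : ℝ) ^ (α * m) * (2 : ℝ) ^ (H2 β * m) := by
              apply mul_le_mul h2k hSle (by positivity)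
              exact (Real.rpow_pos_of_pos (by norm_num) _).le
          _ = (2 : ℝ) ^ ((α + H2 β) * m) := by
              rw [← Real.rpow_add (by norm_num)]; ring_nf
          _ ≤ (2 : ℝ) ^ ((m : ℕ) : ℝ) := by
              apply Real.rpow_le_rpow_of_exponent_le (by norm_num)
              nlinarith [Nat.cast_nonneg (α := ℝ) m]
          _ = (2 : ℝ) ^ (m : ℕ) := by
              rw [Real.rpow_natCast]
      exact_mod_cast hreal
    obtain ⟨B, hB⟩ := exists_good_matrix (β := β) hlt
    have hBinj : ∀ x : Fin k → F2, B.mulVec x = 0 → x = 0 := by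
      intro x hx
      by_contra hne
      have h := hB x hne
      rw [hx, hwt_zero] at h
      push_cast at h
      linarith
    have hinj : Function.Injective B.mulVecLin := by
      rw [← LinearMap.ker_eq_bot]
      exact LinearMap.ker_eq_bot'.mpr
        (fun x hx => hBinj x (by rwa [Matrix.mulVecLin_apply] at hx))
    have hrankB : Module.finrank F2 ↥(LinearMap.range B.mulVecLin) = k := by
      rw [LinearMap.finrank_range_of_inj hinj, Module.finrank_pi, Fintype.card_fin]
    have hBrank : B.rank = k := by rw [Matrix.rank]; exact hrankB
    have hBt : Bᵀ.rank = k := by rw [Matrix.rank_transpose]; exact hBrank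
    have hsurj : LinearMap.range (Bᵀ.mulVecLin) = ⊤ := by
      apply Submodule.eq_top_of_finrank_eq
      rw [Module.finrank_pi, Fintype.card_fin]
      rw [Matrix.rank] at hBt
      exact hBt
    have hAt : (B * Bᵀ)ᵀ = B * Bᵀ := by
      rw [Matrix.transpose_mul, Matrix.transpose_transpose]
    have hrow : ∀ i : Fin m, (B * Bᵀ) i = B.mulVec (B i) := by
      intro i
      funext j
      simp only [Matrix.mul_apply, Matrix.mulVec, dotProduct, Matrix.transpose_apply]
      exact Finset.sum_congr rfl (fun l _ => mul_comm _ _)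
    have hspan : Submodule.span F2 (Set.range (B * Bᵀ)) ≤ LinearMap.range B.mulVecLin := by
      apply Submodule.span_le.mpr
      rintro _ ⟨i, rfl⟩
      exact ⟨B i, by rw [Matrix.mulVecLin_apply, ← hrow i]⟩
    have hwtv : ∀ v ∈ LinearMap.range B.mulVecLin, v ≠ 0 → β * m ≤ (hwt v : ℝ) := by
      rintro v ⟨x, rfl⟩ hv0
      have hx : x ≠ 0 := by
        rintro rfl
        apply hv0
        rw [Matrix.mulVecLin_apply, Matrix.mulVec_zero]
      have h := hB x hx
      rwa [Matrix.mulVecLin_apply]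
    refine ⟨B * Bᵀ, ?_, ?_, ?_⟩
    · rw [Matrix.rank, Matrix.mulVecLin_mul,
        LinearMap.range_comp_of_range_eq_top _ hsurj, hrankB]
    · intro v hv hv0
      rw [Ccol, hAt] at hv
      exact hwtv v (hspan hv) hv0
    · intro v hv hv0
      rw [Crow] at hv
      exact hwtv v (hspan hv) hv0
end

section
/- For every nonzero m×m matrix A over F₂, the product of the minimum distances of its row and column spaces is at most the number of nonzero entries of A: drow(A)·dcol(A) ≤ |A|. -/
set_option linter.unusedSectionVars false

open Finset Matrix

/-- For every nonzero binary matrix `A`, `drow(A) · dcol(A) ≤ |A|`. -/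
theorem drow_mul_dcol_le_nnz {m : ℕ} (A : Matrix (Fin m) (Fin m) F2) (hA : A ≠ 0) :
    drow A * dcol A ≤ nnz A := by
  have hrow : ∃ i : Fin m, A i ≠ 0 := by
    by_contra h
    push_neg at h
    exact hA (by ext i j; simp [h i])
  obtain ⟨i0, hi0⟩ := hrow
  have hSne : {w | ∃ v ∈ Crow A, v ≠ 0 ∧ hwt v = w}.Nonempty :=
    ⟨hwt (A i0), A i0, Submodule.subset_span ⟨i0, rfl⟩, hi0, rfl⟩
  obtain ⟨v, hvmem, hvne, hvwt⟩ := Nat.sInf_mem hSne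
  obtain ⟨c, hc⟩ := (Submodule.mem_span_range_iff_exists_fun F2).mp hvmem
  have hcol : ∀ j : Fin m, v j ≠ 0 → Aᵀ j ≠ 0 := by
    intro j hj hzero
    apply hj
    have hv : v j = ∑ i, c i • A i j := by
      rw [← hc]; simp [Finset.sum_apply]
    rw [hv]
    apply Finset.sum_eq_zero
    intro i _
    have : A i j = 0 := congrFun hzero i
    simp [this]
  have hdcol : ∀ j : Fin m, v j ≠ 0 → dcol A ≤ hwt (Aᵀ j) := by
    intro j hj
    exact Nat.sInf_le ⟨Aᵀ j, Submodule.subset_span ⟨j, rfl⟩, hcol j hj, rfl⟩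
  have hnnz : nnz A = ∑ j : Fin m, hwt (Aᵀ j) := by
    simp only [nnz, hwt, Finset.card_filter]
    rw [Fintype.sum_prod_type, Finset.sum_comm]
    refine Finset.sum_congr rfl (fun j _ => Finset.sum_congr rfl (fun i _ => ?_))
    by_cases h : A i j = 0 <;> simp [Matrix.transpose_apply, h]
  calc drow A * dcol A
      = ∑ _j ∈ Finset.univ.filter (fun j => v j ≠ 0), dcol A := by
        rw [Finset.sum_const, smul_eq_mul, drow, ← hvwt]; rfl
    _ ≤ ∑ j ∈ Finset.univ.filter (fun j => v j ≠ 0), hwt (Aᵀ j) :=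
        Finset.sum_le_sum (fun j hj => hdcol j (Finset.mem_filter.mp hj).2)
    _ ≤ ∑ j : Fin m, hwt (Aᵀ j) :=
        Finset.sum_le_sum_of_subset (Finset.filter_subset _ _)
    _ = nnz A := hnnz.symm
end

section
/- For every nonzero m×m matrix A over F₂: rank(A)·drow(A) ≤ |A| and rank(A)·dcol(A) ≤ |A|; in particular rank(A)·min(drow(A), dcol(A)) ≤ |A|. -/
set_option linter.unusedSectionVars false

open Finset Matrix

lemma nnz_sum {m : ℕ} (A : Matrix (Fin m) (Fin m) F2) :
    nnz A = ∑ i, hwt (A i) := by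
  simp only [nnz, hwt, Finset.card_filter]
  rw [Fintype.sum_prod_type]

lemma nnz_transpose {m : ℕ} (A : Matrix (Fin m) (Fin m) F2) :
    nnz Aᵀ = nnz A := by
  simp only [nnz]
  apply Finset.card_bij' (fun p _ => p.swap) (fun p _ => p.swap) <;>
    simp [Matrix.transpose_apply, Finset.mem_filter]
  · intro a b h; exact (Finset.mem_filter.mp h).2
  · intro a b h; exact Finset.mem_filter.mpr ⟨Finset.mem_univ _, h⟩

lemma key {m : ℕ} (A : Matrix (Fin m) (Fin m) F2) (hA : A ≠ 0) :
    A.rank * drow A ≤ nnz A := by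
  classical
  set S : Finset (Fin m) := Finset.univ.filter (fun i => A i ≠ 0) with hS
  have hd : ∀ i ∈ S, drow A ≤ hwt (A i) := by
    intro i hi
    apply Nat.sInf_le
    exact ⟨A i, Submodule.subset_span ⟨i, rfl⟩, (Finset.mem_filter.mp hi).2, rfl⟩
  have hrank : A.rank ≤ S.card := by
    have h1 : A.rank = Aᵀ.rank := (Matrix.rank_transpose A).symm
    rw [h1, Matrix.rank_eq_finrank_span_cols]
    change Module.finrank F2 ↥(Submodule.span F2 (Set.range A)) ≤ S.card
    have hle : Submodule.span F2 (Set.range A) ≤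
        Submodule.span F2 (↑(S.image A) : Set (Fin m → F2)) := by
      rw [Submodule.span_le]
      rintro x ⟨i, rfl⟩
      by_cases h : A i = 0
      · rw [h]; exact Submodule.zero_mem _
      · exact Submodule.subset_span (by
          exact Finset.mem_coe.mpr (Finset.mem_image_of_mem A (by simp [hS, h])))
    calc Module.finrank F2 ↥(Submodule.span F2 (Set.range A))
        ≤ Module.finrank F2 ↥(Submodule.span F2 (↑(S.image A) : Set (Fin m → F2))) :=
          Submodule.finrank_mono hle
      _ ≤ (S.image A).card := finrank_span_finset_le_card _
      _ ≤ S.card := Finset.card_image_le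
  calc A.rank * drow A ≤ S.card * drow A := Nat.mul_le_mul_right _ hrank
    _ = ∑ _i ∈ S, drow A := by rw [Finset.sum_const, smul_eq_mul, mul_comm]
    _ ≤ ∑ i ∈ S, hwt (A i) := Finset.sum_le_sum hd
    _ ≤ ∑ i, hwt (A i) := Finset.sum_le_sum_of_subset (Finset.filter_subset _ _)
    _ = nnz A := (nnz_sum A).symm

/-- For every nonzero binary matrix `A`: `rank(A) · drow(A) ≤ |A|`,
`rank(A) · dcol(A) ≤ |A|`, and consequently `rank(A) · min(drow(A), dcol(A)) ≤ |A|`. -/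
theorem rank_mul_dist_le_nnz {m : ℕ} (A : Matrix (Fin m) (Fin m) F2) (hA : A ≠ 0) :
    A.rank * drow A ≤ nnz A ∧ A.rank * dcol A ≤ nnz A ∧
    A.rank * min (drow A) (dcol A) ≤ nnz A := by
  have h1 : A.rank * drow A ≤ nnz A := key A hA
  have hAt : Aᵀ ≠ 0 := fun h => hA (by simpa using congrArg Matrix.transpose h)
  have h2 : A.rank * dcol A ≤ nnz A := by
    have := key Aᵀ hAt
    rwa [Matrix.rank_transpose, nnz_transpose] at this
  refine ⟨h1, h2, ?_⟩
  rcases min_cases (drow A) (dcol A) with ⟨h, _⟩ | ⟨h, _⟩ <;> rw [h]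
  · exact h1
  · exact h2
end

section
/- For every nonzero m×m matrix A over F₂ with k = rank(A): 2·drow(A)·dcol(A)·(2^k − 1) ≤ |A|·2^k (equivalently, 2·drow(A)·dcol(A)·(1 − 2^{−k}) ≤ |A|). -/
set_option linter.unusedSectionVars false

open Finset Matrix

section AuxImproved

lemma F2_ne_zero_iff (x : F2) : x ≠ 0 ↔ x = 1 := by revert x; decide

lemma half_card_filter {V : Type*} [AddCommGroup V] [Module F2 V] [Fintype V]
    (f : V →ₗ[F2] F2) (v0 : V) (hv0 : f v0 = 1) :
    2 * (Finset.univ.filter (fun v => f v ≠ 0)).card = Fintype.card V := by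
  classical
  have hvv : ∀ v : V, v + v0 + v0 = v := by
    intro v
    have : v0 + v0 = 0 := by
      have := two_smul F2 v0
      rw [show (2 : F2) = 0 by decide, zero_smul] at this
      exact this.symm
    rw [add_assoc, this, add_zero]
  have hswap : (Finset.univ.filter (fun v => f v ≠ 0)).card
      = (Finset.univ.filter (fun v => ¬ f v ≠ 0)).card := by
    apply Finset.card_bij' (fun v _ => v + v0) (fun v _ => v + v0)
    · intro a ha
      simp only [Finset.mem_filter, Finset.mem_univ, true_and, not_not] at ha ⊢
      rw [map_add, hv0, (F2_ne_zero_iff _).1 ha]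
      decide
    · intro a ha
      simp only [Finset.mem_filter, Finset.mem_univ, true_and, not_not] at ha ⊢
      rw [map_add, hv0, ha]
      decide
    · intro a _; exact hvv a
    · intro a _; exact hvv a
  have := Finset.card_filter_add_card_filter_not
    (s := (Finset.univ : Finset V)) (p := fun v => f v ≠ 0)
  rw [Finset.card_univ] at this
  omega

end AuxImproved

/-- For every nonzero binary matrix `A` with `k = rank(A)`:
`2 · drow(A) · dcol(A) · (2^k − 1) ≤ |A| · 2^k`, i.e.
`2 · drow(A) · dcol(A) · (1 − 2^{−k}) ≤ |A|`. -/
theorem improved_nnz_bound {m : ℕ} (A : Matrix (Fin m) (Fin m) F2) (hA : A ≠ 0)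
    (k : ℕ) (hk : k = A.rank) :
    2 * drow A * dcol A * (2 ^ k - 1) ≤ nnz A * 2 ^ k := by
  classical
  set W : Submodule F2 (Fin m → F2) := Ccol A with hWdef
  letI : Fintype W := Fintype.ofFinite _
  have hcardW : Fintype.card W = 2 ^ k := by
    rw [Module.card_eq_pow_finrank (K := F2) (V := W), ZMod.card, hk,
      Matrix.rank_eq_finrank_span_cols]
    rfl
  obtain ⟨i0, j0, hij0⟩ : ∃ i j, A i j ≠ 0 := by
    by_contra h
    push_neg at h
    exact hA (Matrix.ext fun i j => h i j)
  have hcolmem : ∀ j, Aᵀ j ∈ W := fun j => Submodule.subset_span ⟨j, rfl⟩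
  have hk1 : 1 ≤ k := by
    by_contra h
    have hk0 : k = 0 := by omega
    rw [hk0, pow_zero] at hcardW
    have hsub : Subsingleton W := Fintype.card_le_one_iff_subsingleton.1 hcardW.le
    have : (⟨Aᵀ j0, hcolmem j0⟩ : W) = ⟨0, W.zero_mem⟩ := Subsingleton.elim _ _
    have := congrFun (congrArg Subtype.val this) i0
    exact hij0 this
  have hpk : 2 ^ k = 2 * 2 ^ (k - 1) := by
    conv_lhs => rw [show k = (k - 1) + 1 by omega]
    rw [pow_succ]
    ring
  set nr : ℕ := (Finset.univ.filter (fun i : Fin m => A i ≠ 0)).card with hnr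
  -- per-coordinate counts
  have hcount : ∀ i : Fin m,
      (Finset.univ.filter (fun v : W => (v : Fin m → F2) i ≠ 0)).card
        ≤ if A i ≠ 0 then 2 ^ (k - 1) else 0 := by
    intro i
    by_cases hAi : A i = 0
    · simp only [hAi, ne_eq, not_true_eq_false, if_false, Nat.le_zero,
        Finset.card_eq_zero, Finset.filter_eq_empty_iff]
      intro v _
      have hker : W ≤ LinearMap.ker (LinearMap.proj i :
          (Fin m → F2) →ₗ[F2] F2) := by
        rw [hWdef, Ccol, Submodule.span_le]
        rintro _ ⟨j, rfl⟩
        simp only [SetLike.mem_coe, LinearMap.mem_ker, LinearMap.proj_apply]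
        exact congrFun hAi j
      simpa using hker v.2
    · obtain ⟨j, hj⟩ : ∃ j, A i j ≠ 0 := by
        by_contra h
        push_neg at h
        exact hAi (funext h)
      have key := half_card_filter
        ((LinearMap.proj i : (Fin m → F2) →ₗ[F2] F2).comp W.subtype)
        ⟨Aᵀ j, hcolmem j⟩ (by
          simpa [Matrix.transpose_apply] using (F2_ne_zero_iff _).1 hj)
      simp only [LinearMap.comp_apply, LinearMap.proj_apply,
        Submodule.coe_subtype] at key
      rw [hcardW, hpk] at key
      rw [if_pos hAi]
      convert (le_of_eq (Nat.eq_of_mul_eq_mul_left two_pos key)) using 2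
      · rfl
      · ext v; rw [Finset.mem_filter]
        exact (@Finset.mem_filter _ (fun v : W => (LinearMap.proj i ∘ₗ W.subtype) v ≠ 0) _ _ v).symm
  -- double counting
  have hswap : ∑ v : W, hwt (v : Fin m → F2)
      = ∑ i : Fin m, (Finset.univ.filter
          (fun v : W => (v : Fin m → F2) i ≠ 0)).card := by
    have h1 : ∀ v : W, hwt (v : Fin m → F2)
        = ∑ i : Fin m, if (v : Fin m → F2) i ≠ 0 then 1 else 0 := by
      intro v
      rw [hwt, Finset.card_eq_sum_ones, Finset.sum_filter]
    simp_rw [h1]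
    rw [Finset.sum_comm]
    exact Finset.sum_congr rfl fun i _ => by
      rw [Finset.card_eq_sum_ones, Finset.sum_filter]
  have hupper : ∑ v : W, hwt (v : Fin m → F2) ≤ nr * 2 ^ (k - 1) := by
    rw [hswap]
    calc ∑ i : Fin m, (Finset.univ.filter
            (fun v : W => (v : Fin m → F2) i ≠ 0)).card
        ≤ ∑ i : Fin m, (if A i ≠ 0 then 2 ^ (k - 1) else 0) :=
          Finset.sum_le_sum fun i _ => hcount i
      _ = nr * 2 ^ (k - 1) := by
          rw [hnr, Finset.card_eq_sum_ones, Finset.sum_mul, Finset.sum_filter]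
          exact Finset.sum_congr rfl fun i _ => by split_ifs <;> simp_all
  have hlower : dcol A * (2 ^ k - 1) ≤ ∑ v : W, hwt (v : Fin m → F2) := by
    have hsub : (Finset.univ.erase (0 : W)) ⊆ Finset.univ := Finset.erase_subset _ _
    calc dcol A * (2 ^ k - 1)
        = ∑ _v ∈ Finset.univ.erase (0 : W), dcol A := by
          rw [Finset.sum_const, Finset.card_erase_of_mem (Finset.mem_univ _),
            Finset.card_univ, hcardW, smul_eq_mul, mul_comm]
      _ ≤ ∑ v ∈ Finset.univ.erase (0 : W), hwt (v : Fin m → F2) := by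
          refine Finset.sum_le_sum fun v hv => ?_
          have hv0 : (v : Fin m → F2) ≠ 0 := by
            intro h
            exact (Finset.mem_erase.1 hv).1 (Subtype.ext h)
          exact Nat.sInf_le ⟨(v : Fin m → F2), v.2, hv0, rfl⟩
      _ ≤ ∑ v : W, hwt (v : Fin m → F2) := Finset.sum_le_sum_of_subset hsub
  have h1 : dcol A * (2 ^ k - 1) ≤ nr * 2 ^ (k - 1) := hlower.trans hupper
  have hnnz : nnz A = ∑ i, hwt (A i) := by
    rw [nnz, Finset.card_eq_sum_ones, Finset.sum_filter, Fintype.sum_prod_type]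
    exact Finset.sum_congr rfl fun i _ => by
      rw [hwt, Finset.card_eq_sum_ones, Finset.sum_filter]
  have h2 : nr * drow A ≤ nnz A := by
    rw [hnnz]
    calc nr * drow A
        = ∑ _i ∈ Finset.univ.filter (fun i : Fin m => A i ≠ 0), drow A := by
          rw [Finset.sum_const, smul_eq_mul]
      _ ≤ ∑ i ∈ Finset.univ.filter (fun i : Fin m => A i ≠ 0), hwt (A i) := by
          refine Finset.sum_le_sum fun i hi => ?_
          exact Nat.sInf_le ⟨A i, Submodule.subset_span ⟨i, rfl⟩,
            (Finset.mem_filter.1 hi).2, rfl⟩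
      _ ≤ ∑ i, hwt (A i) := Finset.sum_le_sum_of_subset (Finset.filter_subset _ _)
  calc 2 * drow A * dcol A * (2 ^ k - 1)
      = 2 * drow A * (dcol A * (2 ^ k - 1)) := by ring
    _ ≤ 2 * drow A * (nr * 2 ^ (k - 1)) := Nat.mul_le_mul_left _ h1
    _ = (nr * drow A) * (2 * 2 ^ (k - 1)) := by ring
    _ = (nr * drow A) * 2 ^ k := by rw [← hpk]
    _ ≤ nnz A * 2 ^ k := Nat.mul_le_mul_right _ h2
end
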